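/- arXiv:1305.2634 — 5 statements merged into one kernel-verified Lean document; each statement's English description precedes it below -/
import Mathlib

section
/- Suppose the minorization condition holds with constant β ∈ (0,1), i.e. p_i(x, A) ≥ β Π(A) for all i ≥ 1, all x ∈ E and all measurable A. Define for each i the kernel ν_i(x, A) = (p_i(x, A) − β Π(A)) / (1 − β), and let ν^n(x₀, ·) denote the composition ν_1 ν_2 ⋯ ν_n applied to x₀. Then each ν_i is a Markov kernel with Π as invariant measure, and for every n ≥ 1 the n-step distribution satisfies P^n(x₀, ·) − Π(·) = (1 − β)^n ( ν^n(x₀, ·) − Π(·) ) as signed measures, for every initial point x₀. -/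
open MeasureTheory ProbabilityTheory
open scoped ENNReal

/-- `stepsKernel p n` is the composition `p₁ p₂ ⋯ pₙ` (first apply `p 1`, then `p 2`, …),
so that `stepsKernel p n x₀` is the `n`-step distribution `Pⁿ(x₀, ·)`. -/
noncomputable def stepsKernel {E : Type*} [MeasurableSpace E]
    (p : ℕ → Kernel E E) : ℕ → Kernel E E
  | 0 => Kernel.id
  | n + 1 => (p (n + 1)) ∘ₖ stepsKernel p n

/-- Under the minorization condition `pᵢ(x, A) ≥ β Pi(A)`, the residual
kernels `νᵢ(x, A) = (pᵢ(x, A) − β Pi(A)) / (1 − β)` are Markov kernels leaving `Pi`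
invariant, and `Pⁿ(x₀, ·) − Pi(·) = (1 − β)ⁿ (νⁿ(x₀, ·) − Pi(·))` as signed measures. -/
theorem residual_kernel_decomposition
    {E : Type*} [MeasurableSpace E]
    (Pi : Measure E) [IsProbabilityMeasure Pi]
    (p : ℕ → Kernel E E) [∀ i, IsMarkovKernel (p i)]
    (hinv : ∀ i ≥ 1, ∀ A : Set E, MeasurableSet A → ∫⁻ x, p i x A ∂Pi = Pi A)
    (β : ℝ) (hβ0 : 0 < β) (hβ1 : β < 1)
    (hminor : ∀ i ≥ 1, ∀ x : E, ∀ A : Set E, MeasurableSet A →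
      ENNReal.ofReal β * Pi A ≤ p i x A)
    (ν : ℕ → Kernel E E)
    (hν : ∀ i ≥ 1, ∀ x : E, ∀ A : Set E, MeasurableSet A →
      (ν i x A).toReal = ((p i x A).toReal - β * (Pi A).toReal) / (1 - β)) :
    (∀ i ≥ 1, IsMarkovKernel (ν i) ∧
      ∀ A : Set E, MeasurableSet A → ∫⁻ x, ν i x A ∂Pi = Pi A) ∧
    (∀ n ≥ 1, ∀ x₀ : E, ∀ A : Set E, MeasurableSet A →
      (stepsKernel p n x₀ A).toReal - (Pi A).toReal
        = (1 - β) ^ n * ((stepsKernel ν n x₀ A).toReal - (Pi A).toReal)) := by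
  have hβ0' : (0:ℝ) ≤ β := hβ0.le
  have h1β : (0:ℝ) < 1 - β := by linarith
  have h1β' : (0:ℝ) ≤ 1 - β := h1β.le
  have h1βne : (1:ℝ) - β ≠ 0 := h1β.ne'
  -- ν i x univ = 1
  have huniv : ∀ i ≥ 1, ∀ x : E, ν i x Set.univ = 1 := by
    intro i hi x
    have h := hν i hi x Set.univ MeasurableSet.univ
    rw [show (p i x) Set.univ = 1 from measure_univ, show Pi Set.univ = 1 from measure_univ] at h
    rw [← ENNReal.toReal_eq_one_iff]
    rw [h]; simp only [ENNReal.toReal_one]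
    field_simp
  have hmark : ∀ i ≥ 1, IsMarkovKernel (ν i) := by
    intro i hi
    exact ⟨fun x => ⟨huniv i hi x⟩⟩
  have hfinν : ∀ i ≥ 1, ∀ x : E, ∀ A : Set E, ν i x A ≠ ∞ := by
    intro i hi x A
    have h1 : ν i x A ≤ 1 := by
      rw [← huniv i hi x]; exact measure_mono (Set.subset_univ A)
    exact (h1.trans_lt ENNReal.one_lt_top).ne
  -- pointwise decomposition of p i x as measures of sets
  have hdecomp : ∀ i ≥ 1, ∀ x : E, ∀ A : Set E, MeasurableSet A →
      p i x A = ENNReal.ofReal β * Pi A + ENNReal.ofReal (1 - β) * ν i x A := by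
    intro i hi x A hA
    have hfp : p i x A ≠ ∞ := measure_ne_top _ _
    have hfPi : Pi A ≠ ∞ := measure_ne_top _ _
    have hrhs : ENNReal.ofReal β * Pi A + ENNReal.ofReal (1 - β) * ν i x A ≠ ∞ :=
      ENNReal.add_ne_top.mpr ⟨ENNReal.mul_ne_top ENNReal.ofReal_ne_top hfPi,
        ENNReal.mul_ne_top ENNReal.ofReal_ne_top (hfinν i hi x A)⟩
    rw [← ENNReal.toReal_eq_toReal_iff' hfp hrhs]
    rw [ENNReal.toReal_add (ENNReal.mul_ne_top ENNReal.ofReal_ne_top hfPi)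
      (ENNReal.mul_ne_top ENNReal.ofReal_ne_top (hfinν i hi x A)),
      ENNReal.toReal_mul, ENNReal.toReal_mul, ENNReal.toReal_ofReal hβ0',
      ENNReal.toReal_ofReal h1β', hν i hi x A hA]
    field_simp
    ring
  -- invariance of Pi under ν i
  have hinvν : ∀ i ≥ 1, ∀ A : Set E, MeasurableSet A → ∫⁻ x, ν i x A ∂Pi = Pi A := by
    intro i hi A hA
    have h1 : ∫⁻ x, p i x A ∂Pi
        = ENNReal.ofReal β * Pi A + ENNReal.ofReal (1 - β) * ∫⁻ x, ν i x A ∂Pi := by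
      rw [lintegral_congr fun x => hdecomp i hi x A hA,
        lintegral_add_left measurable_const, lintegral_const,
        lintegral_const_mul _ ((ν i).measurable_coe hA), measure_univ, mul_one]
    rw [hinv i hi A hA] at h1
    have h2 : Pi A = ENNReal.ofReal β * Pi A + ENNReal.ofReal (1 - β) * Pi A := by
      rw [← add_mul, ← ENNReal.ofReal_add hβ0' h1β']
      norm_num
    have h3 := (ENNReal.add_right_inj
      (ENNReal.mul_ne_top ENNReal.ofReal_ne_top (measure_ne_top _ _))).mp (h1.symm.trans h2)
    exact (ENNReal.mul_right_inj
      (ENNReal.ofReal_pos.mpr h1β).ne' ENNReal.ofReal_ne_top).mp h3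
  -- Markov instances for the composed chains
  have hmarkP : ∀ n, IsMarkovKernel (stepsKernel p n) := by
    intro n
    induction n with
    | zero => rw [stepsKernel]; infer_instance
    | succ n ih => rw [stepsKernel]; haveI := ih; infer_instance
  have hmarkN : ∀ n, IsMarkovKernel (stepsKernel ν n) := by
    intro n
    induction n with
    | zero => rw [stepsKernel]; infer_instance
    | succ n ih =>
      rw [stepsKernel]
      haveI := hmark (n + 1) (Nat.le_add_left 1 n)
      haveI := ih
      infer_instance
  -- main claim as equality of measures
  have hpow0 : ∀ n : ℕ, (0:ℝ) ≤ (1 - β) ^ n := fun n => pow_nonneg h1β' n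
  have hpow1 : ∀ n : ℕ, (1 - β) ^ n ≤ 1 := fun n => pow_le_one₀ h1β' (by linarith)
  have hclaim : ∀ n, ∀ x : E, stepsKernel p n x
      = ENNReal.ofReal ((1 - β) ^ n) • stepsKernel ν n x
        + ENNReal.ofReal (1 - (1 - β) ^ n) • Pi := by
    intro n
    induction n with
    | zero =>
      intro x
      simp [stepsKernel]
    | succ n ih =>
      intro x
      haveI := hmarkP n
      haveI := hmarkN n
      refine Measure.ext fun A hA => ?_
      have hν' := hmark (n + 1) (Nat.le_add_left 1 n)
      have hstep : stepsKernel p (n + 1) x A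
          = ∫⁻ y, p (n + 1) y A ∂(stepsKernel p n x) := by
        rw [stepsKernel, Kernel.comp_apply' _ _ _ hA]
      have hνstep : stepsKernel ν (n + 1) x A
          = ∫⁻ y, ν (n + 1) y A ∂(stepsKernel ν n x) := by
        rw [stepsKernel, Kernel.comp_apply' _ _ _ hA]
      have hint : ∫⁻ y, ν (n + 1) y A ∂(stepsKernel p n x)
          = ENNReal.ofReal ((1 - β) ^ n) * stepsKernel ν (n + 1) x A
            + ENNReal.ofReal (1 - (1 - β) ^ n) * Pi A := by
        rw [ih x, lintegral_add_measure, lintegral_smul_measure, lintegral_smul_measure,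
          hinvν (n + 1) (Nat.le_add_left 1 n) A hA, hνstep, smul_eq_mul, smul_eq_mul]
      rw [hstep, lintegral_congr fun y => hdecomp (n + 1) (Nat.le_add_left 1 n) y A hA,
        lintegral_add_left measurable_const, lintegral_const,
        lintegral_const_mul _ ((ν (n + 1)).measurable_coe hA), measure_univ, mul_one, hint]
      rw [mul_add, ← mul_assoc, ← mul_assoc, ← ENNReal.ofReal_mul h1β',
        ← ENNReal.ofReal_mul h1β']
      have e1 : (1 - β) * (1 - β) ^ n = (1 - β) ^ (n + 1) := (pow_succ' (1 - β) n).symm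
      have e2 : ENNReal.ofReal β * Pi A + ENNReal.ofReal ((1 - β) * (1 - (1 - β) ^ n)) * Pi A
          = ENNReal.ofReal (1 - (1 - β) ^ (n + 1)) * Pi A := by
        rw [← add_mul, ← ENNReal.ofReal_add hβ0' (by nlinarith [hpow1 n])]
        congr 1
        rw [pow_succ']
        ring_nf
      rw [e1, add_comm (ENNReal.ofReal β * Pi A), add_assoc, add_comm _ (ENNReal.ofReal β * Pi A), e2]
      simp [Measure.add_apply, Measure.smul_apply, smul_eq_mul]
  refine ⟨fun i hi => ⟨hmark i hi, hinvν i hi⟩, fun n _hn x A hA => ?_⟩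
  have h := congrArg (fun μ : Measure E => (μ A).toReal) (hclaim n x)
  simp only [Measure.add_apply, Measure.smul_apply, smul_eq_mul] at h
  haveI := hmarkN n
  rw [ENNReal.toReal_add (ENNReal.mul_ne_top ENNReal.ofReal_ne_top (measure_ne_top _ _))
      (ENNReal.mul_ne_top ENNReal.ofReal_ne_top (measure_ne_top _ _)),
    ENNReal.toReal_mul, ENNReal.toReal_mul, ENNReal.toReal_ofReal (hpow0 n),
    ENNReal.toReal_ofReal (by linarith [hpow1 n])] at h
  rw [h]
  ring
end

section
/- (Theorem 2, Strong law of large numbers.) Suppose the minorization condition holds with constant β ∈ (0,1), i.e. p_i(x, A) ≥ β Π(A) for all i ≥ 1, all x ∈ E and all measurable A. Let h : E → ℝ be a bounded measurable function and let (x_n)_{n≥0} be the time-inhomogeneous Markov chain with initial point x₀ and transition kernels (p_i), realized on the canonical path space. Then S_n/n → ∫ h dΠ almost surely, where S_n = Σ_{i=1}^n h(x_i). -/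
open MeasureTheory ProbabilityTheory Filter
open scoped ENNReal

section Aux
variable {E : Type*} [MeasurableSpace E]
variable {E : Type*} [MeasurableSpace E]

lemma my_integrable_of_bounded {α : Type*} [MeasurableSpace α] {ν : Measure α}
    [IsFiniteMeasure ν] {f : α → ℝ} (hf : AEStronglyMeasurable f ν) {M : ℝ}
    (hb : ∀ x, |f x| ≤ M) : Integrable f ν :=
  (integrable_const M).mono' hf (Filter.Eventually.of_forall (by
    simpa [Real.norm_eq_abs] using hb))

noncomputable def kerAct (κ : Kernel E E) (φ : E → ℝ) : E → ℝ :=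
  fun x => ∫ y, φ y ∂κ x

lemma kerAct_measurable (κ : Kernel E E) [IsMarkovKernel κ] {φ : E → ℝ}
    (hφ : Measurable φ) : Measurable (kerAct κ φ) := by
  have : StronglyMeasurable (Function.uncurry fun (_ : E) (y : E) => φ y) :=
    (hφ.comp measurable_snd).stronglyMeasurable
  exact this.integral_kernel_prod_right.measurable

lemma kerAct_bound (κ : Kernel E E) [IsMarkovKernel κ] {φ : E → ℝ} {M : ℝ}
    (hφ : Measurable φ) (hb : ∀ y, |φ y| ≤ M) (x : E) : |kerAct κ φ x| ≤ M := by
  have hM : 0 ≤ M := le_trans (abs_nonneg _) (hb x)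
  calc |kerAct κ φ x| ≤ ∫ y, |φ y| ∂κ x := by
        simpa [kerAct, Real.norm_eq_abs] using norm_integral_le_integral_norm (μ := κ x) φ
    _ ≤ ∫ _, M ∂κ x := integral_mono_of_nonneg
        (Filter.Eventually.of_forall fun y => abs_nonneg _)
        (integrable_const M) (Filter.Eventually.of_forall hb)
    _ = M := by simp

/-- one-step Markov property for bounded measurable functions -/
lemma step_one (p : ℕ → Kernel E E) [∀ i, IsMarkovKernel (p i)]
    (μ : Measure (ℕ → E)) [IsProbabilityMeasure μ]
    (hmarkov : ∀ n : ℕ, ∀ g : (ℕ → E) → ℝ, Measurable g → (∀ ω, |g ω| ≤ 1) →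
      (∀ ω ω' : ℕ → E, (∀ i ≤ n, ω i = ω' i) → g ω = g ω') →
      ∀ A : Set E, MeasurableSet A →
        ∫ ω, g ω * Set.indicator A (fun _ => (1 : ℝ)) (ω (n + 1)) ∂μ
          = ∫ ω, g ω * (p (n + 1) (ω n) A).toReal ∂μ)
    (n : ℕ) (g : (ℕ → E) → ℝ) (hg : Measurable g) (hg1 : ∀ ω, |g ω| ≤ 1)
    (hgpast : ∀ ω ω' : (ℕ → E), (∀ i ≤ n, ω i = ω' i) → g ω = g ω')
    (φ : E → ℝ) (hφ : Measurable φ) (M : ℝ) (hbφ : ∀ y, |φ y| ≤ M) :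
    ∫ ω, g ω * φ (ω (n + 1)) ∂μ = ∫ ω, g ω * kerAct (p (n + 1)) φ (ω n) ∂μ := by
  -- step 1: simple functions
  have hsimple : ∀ ψ : SimpleFunc E ℝ,
      ∫ ω, g ω * ψ (ω (n + 1)) ∂μ = ∫ ω, g ω * kerAct (p (n + 1)) ψ (ω n) ∂μ := by
    intro ψ
    induction ψ using SimpleFunc.induction with
    | @const c s hs =>
      have hfun : ∀ y : E,
          (SimpleFunc.piecewise s hs (SimpleFunc.const E c) (SimpleFunc.const E 0)) y
            = c * Set.indicator s (fun _ => (1 : ℝ)) y := by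
        intro y
        by_cases hy : y ∈ s <;>
          simp [SimpleFunc.piecewise_apply, Set.indicator, hy]
      have hker : ∀ x : E,
          kerAct (p (n + 1))
            (SimpleFunc.piecewise s hs (SimpleFunc.const E c) (SimpleFunc.const E 0)) x
            = c * (p (n + 1) x s).toReal := by
        intro x
        unfold kerAct
        rw [integral_congr_ae (Filter.Eventually.of_forall hfun)]
        rw [integral_const_mul]
        have : ∫ y, Set.indicator s (fun _ => (1 : ℝ)) y ∂(p (n + 1) x)
            = ((p (n + 1) x) s).toReal := by
          rw [integral_indicator_const (1 : ℝ) hs]; simp [Measure.real]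
        rw [this]
      calc ∫ ω, g ω *
            (SimpleFunc.piecewise s hs (SimpleFunc.const E c) (SimpleFunc.const E 0))
              (ω (n + 1)) ∂μ
          = ∫ ω, c * (g ω * Set.indicator s (fun _ => (1 : ℝ)) (ω (n + 1))) ∂μ := by
            refine integral_congr_ae (Filter.Eventually.of_forall fun ω => ?_)
            simp only [hfun]; ring
        _ = c * ∫ ω, g ω * Set.indicator s (fun _ => (1 : ℝ)) (ω (n + 1)) ∂μ :=
            integral_const_mul _ _
        _ = c * ∫ ω, g ω * (p (n + 1) (ω n) s).toReal ∂μ := by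
            rw [hmarkov n g hg hg1 hgpast s hs]
        _ = ∫ ω, c * (g ω * (p (n + 1) (ω n) s).toReal) ∂μ :=
            (integral_const_mul _ _).symm
        _ = _ := by
            refine integral_congr_ae (Filter.Eventually.of_forall fun ω => ?_)
            simp only [hker]; ring
    | @add ψ₁ ψ₂ hdisj h₁ h₂ =>
      obtain ⟨M₁, hM₁⟩ := ψ₁.exists_forall_norm_le
      obtain ⟨M₂, hM₂⟩ := ψ₂.exists_forall_norm_le
      simp only [Real.norm_eq_abs] at hM₁ hM₂
      have hint : ∀ (ψ : SimpleFunc E ℝ) (Mb : ℝ), (∀ y, |ψ y| ≤ Mb) →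
          Integrable (fun ω => g ω * ψ (ω (n + 1))) μ := by
        intro ψ Mb hMb
        refine my_integrable_of_bounded
          ((hg.mul (ψ.measurable.comp (measurable_pi_apply (n + 1)))).aestronglyMeasurable)
          (M := Mb) fun ω => ?_
        rw [abs_mul]
        calc |g ω| * |ψ (ω (n+1))| ≤ 1 * Mb := by
              have := hMb (ω (n+1))
              have h0 : (0:ℝ) ≤ Mb := le_trans (abs_nonneg _) this
              exact mul_le_mul (hg1 ω) this (abs_nonneg _) zero_le_one
          _ = Mb := one_mul _
      have hintK : ∀ (ψ : SimpleFunc E ℝ) (Mb : ℝ), (∀ y, |ψ y| ≤ Mb) →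
          Integrable (fun ω => g ω * kerAct (p (n + 1)) ψ (ω n)) μ := by
        intro ψ Mb hMb
        refine my_integrable_of_bounded
          ((hg.mul ((kerAct_measurable _ ψ.measurable).comp
            (measurable_pi_apply n))).aestronglyMeasurable) (M := Mb) fun ω => ?_
        rw [abs_mul]
        have hK := kerAct_bound (p (n+1)) ψ.measurable hMb (ω n)
        have h0 : (0:ℝ) ≤ Mb := le_trans (abs_nonneg _) hK
        calc |g ω| * |kerAct (p (n+1)) ψ (ω n)| ≤ 1 * Mb :=
              mul_le_mul (hg1 ω) hK (abs_nonneg _) zero_le_one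
          _ = Mb := one_mul _
      have hkadd : ∀ x, kerAct (p (n + 1)) (ψ₁ + ψ₂) x
          = kerAct (p (n + 1)) ψ₁ x + kerAct (p (n + 1)) ψ₂ x := by
        intro x
        unfold kerAct
        have i1 : Integrable ψ₁ (p (n+1) x) :=
          my_integrable_of_bounded ψ₁.measurable.aestronglyMeasurable hM₁
        have i2 : Integrable ψ₂ (p (n+1) x) :=
          my_integrable_of_bounded ψ₂.measurable.aestronglyMeasurable hM₂
        simpa using integral_add i1 i2
      calc ∫ ω, g ω * (ψ₁ + ψ₂) (ω (n + 1)) ∂μ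
          = ∫ ω, (g ω * ψ₁ (ω (n + 1)) + g ω * ψ₂ (ω (n + 1))) ∂μ := by
            refine integral_congr_ae (Filter.Eventually.of_forall fun ω => ?_)
            simp; ring
        _ = (∫ ω, g ω * ψ₁ (ω (n + 1)) ∂μ) + ∫ ω, g ω * ψ₂ (ω (n + 1)) ∂μ :=
            integral_add (hint ψ₁ M₁ hM₁) (hint ψ₂ M₂ hM₂)
        _ = (∫ ω, g ω * kerAct (p (n+1)) ψ₁ (ω n) ∂μ)
              + ∫ ω, g ω * kerAct (p (n+1)) ψ₂ (ω n) ∂μ := by rw [h₁, h₂]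
        _ = ∫ ω, (g ω * kerAct (p (n+1)) ψ₁ (ω n) + g ω * kerAct (p (n+1)) ψ₂ (ω n)) ∂μ :=
            (integral_add (hintK ψ₁ M₁ hM₁) (hintK ψ₂ M₂ hM₂)).symm
        _ = _ := by
            refine integral_congr_ae (Filter.Eventually.of_forall fun ω => ?_)
            simp only [SimpleFunc.coe_add, hkadd]; ring
  -- step 2: approximation
  have hM : 0 ≤ M := by
    rcases isEmpty_or_nonempty E with hE | hE
    · -- E nonempty since p is a Markov kernel... handle: if E empty then the path space
      -- (ℕ → E) has a point iff E nonempty; μ is a probability measure on it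
      have : IsProbabilityMeasure (μ : Measure (ℕ → E)) := inferInstance
      by_contra hcon
      push_neg at hcon
      -- ℕ → E is empty? No: if E is empty, ℕ → E is empty, contradiction with μ prob
      have hempty : IsEmpty (ℕ → E) := ⟨fun f => (hE.false (f 0))⟩
      have h1 := measure_univ (μ := μ)
      rw [Set.univ_eq_empty_iff.2 hempty] at h1
      simp at h1
    · exact le_trans (abs_nonneg _) (hbφ (Classical.arbitrary E))
  haveI : TopologicalSpace.SeparableSpace (Set.range φ ∪ {0} : Set ℝ) :=
    hφ.stronglyMeasurable.separableSpace_range_union_singleton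
  set ψ : ℕ → SimpleFunc E ℝ :=
    SimpleFunc.approxOn φ hφ (Set.range φ ∪ {0}) 0 (by simp) with hψdef
  have hψb : ∀ k x, |ψ k x| ≤ M + M := by
    intro k x
    have := SimpleFunc.norm_approxOn_zero_le (s := Set.range φ ∪ {0}) hφ (by simp) x k
    rw [Real.norm_eq_abs, Real.norm_eq_abs] at this
    exact le_trans this (add_le_add (hbφ x) (hbφ x))
  have hψtendsto : ∀ x, Tendsto (fun k => ψ k x) atTop (nhds (φ x)) := by
    intro x
    exact SimpleFunc.tendsto_approxOn hφ (by simp)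
      (subset_closure (Set.mem_union_left _ (Set.mem_range_self x)))
  -- LHS convergence
  have hL : Tendsto (fun k => ∫ ω, g ω * ψ k (ω (n + 1)) ∂μ) atTop
      (nhds (∫ ω, g ω * φ (ω (n + 1)) ∂μ)) := by
    refine tendsto_integral_of_dominated_convergence (fun _ => M + M)
      (fun k => (hg.mul ((ψ k).measurable.comp
        (measurable_pi_apply (n + 1)))).aestronglyMeasurable)
      (integrable_const _) (fun k => Filter.Eventually.of_forall fun ω => ?_)
      (Filter.Eventually.of_forall fun ω => ?_)
    · rw [Real.norm_eq_abs, abs_mul]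
      calc |g ω| * |ψ k (ω (n+1))| ≤ 1 * (M + M) :=
            mul_le_mul (hg1 ω) (hψb k _) (abs_nonneg _) zero_le_one
        _ = M + M := one_mul _
    · exact (hψtendsto (ω (n+1))).const_mul _
  -- RHS convergence
  have hKtendsto : ∀ x, Tendsto (fun k => kerAct (p (n+1)) (ψ k) x) atTop
      (nhds (kerAct (p (n+1)) φ x)) := by
    intro x
    refine tendsto_integral_of_dominated_convergence (fun _ => M + M)
      (fun k => (ψ k).measurable.aestronglyMeasurable)
      (integrable_const _) (fun k => Filter.Eventually.of_forall fun y => ?_)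
      (Filter.Eventually.of_forall fun y => hψtendsto y)
    rw [Real.norm_eq_abs]; exact hψb k y
  have hR : Tendsto (fun k => ∫ ω, g ω * kerAct (p (n+1)) (ψ k) (ω n) ∂μ) atTop
      (nhds (∫ ω, g ω * kerAct (p (n+1)) φ (ω n) ∂μ)) := by
    refine tendsto_integral_of_dominated_convergence (fun _ => M + M)
      (fun k => (hg.mul ((kerAct_measurable _ (ψ k).measurable).comp
        (measurable_pi_apply n))).aestronglyMeasurable)
      (integrable_const _) (fun k => Filter.Eventually.of_forall fun ω => ?_)
      (Filter.Eventually.of_forall fun ω => (hKtendsto (ω n)).const_mul _)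
    rw [Real.norm_eq_abs, abs_mul]
    calc |g ω| * |kerAct (p (n+1)) (ψ k) (ω n)| ≤ 1 * (M + M) :=
          mul_le_mul (hg1 ω) (kerAct_bound _ (ψ k).measurable (hψb k) _)
            (abs_nonneg _) zero_le_one
      _ = M + M := one_mul _
  have : (fun k => ∫ ω, g ω * ψ k (ω (n + 1)) ∂μ)
      = fun k => ∫ ω, g ω * kerAct (p (n+1)) (ψ k) (ω n) ∂μ := by
    funext k; exact hsimple (ψ k)
  rw [this] at hL
  exact tendsto_nhds_unique hL hR

/-- Doeblin contraction: if `β•Π ≤ κ x` for all `x` and `∫ φ dΠ = 0`, `|φ| ≤ M`,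
then `|κφ| ≤ (1-β) M`. -/
lemma kerAct_contract (Pi : Measure E) [IsProbabilityMeasure Pi]
    (κ : Kernel E E) [IsMarkovKernel κ] {β : ℝ} (hβ0 : 0 < β)
    (hmin : ∀ x : E, ∀ A : Set E, MeasurableSet A → ENNReal.ofReal β * Pi A ≤ κ x A)
    {φ : E → ℝ} {M : ℝ} (hφ : Measurable φ) (hb : ∀ y, |φ y| ≤ M)
    (hc : ∫ y, φ y ∂Pi = 0) (x : E) : |kerAct κ φ x| ≤ (1 - β) * M := by
  have hM : 0 ≤ M := le_trans (abs_nonneg _) (hb x)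
  have hle : (ENNReal.ofReal β) • Pi ≤ κ x := by
    refine Measure.le_iff.2 fun A hA => ?_
    simpa [Measure.smul_apply, smul_eq_mul] using hmin x A hA
  have key : ∀ ψ : E → ℝ, Measurable ψ → (∀ y, 0 ≤ ψ y) → (∀ y, |ψ y| ≤ 2 * M) →
      β * ∫ y, ψ y ∂Pi ≤ ∫ y, ψ y ∂κ x := by
    intro ψ hψ hψ0 hψb
    have hint : Integrable ψ (κ x) :=
      my_integrable_of_bounded hψ.aestronglyMeasurable hψb
    have := integral_mono_measure hle (Filter.Eventually.of_forall hψ0) hint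
    rwa [integral_smul_measure, ENNReal.toReal_ofReal hβ0.le, smul_eq_mul] at this
  have hintPi : Integrable φ Pi := my_integrable_of_bounded hφ.aestronglyMeasurable hb
  have hintκ : Integrable φ (κ x) := my_integrable_of_bounded hφ.aestronglyMeasurable hb
  have h1 : β * ∫ y, (M + φ y) ∂Pi ≤ ∫ y, (M + φ y) ∂κ x := by
    refine key _ (measurable_const.add hφ) (fun y => by nlinarith [abs_le.1 (hb y)])
      (fun y => ?_)
    rw [abs_le]; constructor <;> nlinarith [abs_le.1 (hb y)]
  have h2 : β * ∫ y, (M - φ y) ∂Pi ≤ ∫ y, (M - φ y) ∂κ x := by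
    refine key _ (measurable_const.sub hφ) (fun y => by nlinarith [abs_le.1 (hb y)])
      (fun y => ?_)
    rw [abs_le]; constructor <;> nlinarith [abs_le.1 (hb y)]
  rw [integral_add (integrable_const M) hintPi, integral_add (integrable_const M) hintκ]
    at h1
  rw [integral_sub (integrable_const M) hintPi, integral_sub (integrable_const M) hintκ]
    at h2
  have hk : IsProbabilityMeasure (κ x) := IsMarkovKernel.isProbabilityMeasure x
  simp only [integral_const, measure_univ, ENNReal.toReal_one, probReal_univ, smul_eq_mul, one_smul, one_mul, hc,
    add_zero, sub_zero] at h1 h2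
  rw [abs_le]; unfold kerAct; constructor <;> nlinarith

/-- invariance for `lintegral`s -/
lemma lintegral_invariant (Pi : Measure E) [IsProbabilityMeasure Pi]
    (κ : Kernel E E) [IsMarkovKernel κ]
    (hinv : ∀ A : Set E, MeasurableSet A → ∫⁻ x, κ x A ∂Pi = Pi A)
    {f : E → ℝ≥0∞} (hf : Measurable f) :
    ∫⁻ x, ∫⁻ y, f y ∂κ x ∂Pi = ∫⁻ y, f y ∂Pi := by
  have hbind : Pi.bind (fun x => κ x) = Pi := by
    refine Measure.ext fun s hs => ?_
    rw [Measure.bind_apply hs κ.measurable.aemeasurable]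
    exact hinv s hs
  have := Measure.lintegral_bind (m := Pi) (μ := fun x => κ x) κ.measurable.aemeasurable hf.aemeasurable
  rw [hbind] at this
  exact this.symm

/-- invariance for bounded measurable real functions -/
lemma integral_invariant (Pi : Measure E) [IsProbabilityMeasure Pi]
    (κ : Kernel E E) [IsMarkovKernel κ]
    (hinv : ∀ A : Set E, MeasurableSet A → ∫⁻ x, κ x A ∂Pi = Pi A)
    {φ : E → ℝ} {M : ℝ} (hφ : Measurable φ) (hb : ∀ y, |φ y| ≤ M) :
    ∫ x, kerAct κ φ x ∂Pi = ∫ y, φ y ∂Pi := by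
  have hne : (Set.univ : Set E).Nonempty := by
    by_contra hcon
    rw [Set.not_nonempty_iff_eq_empty] at hcon
    have h1 := measure_univ (μ := Pi)
    rw [hcon] at h1; simp at h1
  obtain ⟨x₀, -⟩ := hne
  have hM : 0 ≤ M := le_trans (abs_nonneg _) (hb x₀)
  -- positive and negative parts
  set A : E → ℝ≥0∞ := fun x => ∫⁻ y, ENNReal.ofReal (φ y) ∂κ x with hA
  set B : E → ℝ≥0∞ := fun x => ∫⁻ y, ENNReal.ofReal (-φ y) ∂κ x with hB
  have hφi : ∀ ν : Measure E, IsProbabilityMeasure ν → Integrable φ ν := fun ν hν =>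
    my_integrable_of_bounded hφ.aestronglyMeasurable hb
  have hmA : Measurable A := Measurable.lintegral_kernel (ENNReal.measurable_ofReal.comp hφ)
  have hmB : Measurable B :=
    Measurable.lintegral_kernel (ENNReal.measurable_ofReal.comp hφ.neg)
  have hAb : ∀ x, A x ≤ ENNReal.ofReal M := by
    intro x
    calc A x ≤ ∫⁻ _, ENNReal.ofReal M ∂κ x :=
          lintegral_mono fun y => ENNReal.ofReal_le_ofReal
            (le_trans (le_abs_self _) (hb y))
      _ = ENNReal.ofReal M := by simp
  have hBb : ∀ x, B x ≤ ENNReal.ofReal M := by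
    intro x
    calc B x ≤ ∫⁻ _, ENNReal.ofReal M ∂κ x :=
          lintegral_mono fun y => ENNReal.ofReal_le_ofReal
            (le_trans (neg_le_abs _) (hb y))
      _ = ENNReal.ofReal M := by simp
  have hker : ∀ x, kerAct κ φ x = (A x).toReal - (B x).toReal := by
    intro x
    have : IsProbabilityMeasure (κ x) := IsMarkovKernel.isProbabilityMeasure x
    exact integral_eq_lintegral_pos_part_sub_lintegral_neg_part (hφi _ this)
  have hiA : Integrable (fun x => (A x).toReal) Pi := by
    refine my_integrable_of_bounded (hmA.ennreal_toReal).aestronglyMeasurable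
      (M := M) fun x => ?_
    rw [abs_of_nonneg ENNReal.toReal_nonneg]
    exact ENNReal.toReal_le_of_le_ofReal hM (hAb x)
  have hiB : Integrable (fun x => (B x).toReal) Pi := by
    refine my_integrable_of_bounded (hmB.ennreal_toReal).aestronglyMeasurable
      (M := M) fun x => ?_
    rw [abs_of_nonneg ENNReal.toReal_nonneg]
    exact ENNReal.toReal_le_of_le_ofReal hM (hBb x)
  have hsplit : ∫ x, kerAct κ φ x ∂Pi
      = ∫ x, (A x).toReal ∂Pi - ∫ x, (B x).toReal ∂Pi := by
    rw [← integral_sub hiA hiB]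
    exact integral_congr_ae (Filter.Eventually.of_forall hker)
  have hAfin : ∀ᵐ x ∂Pi, A x < ∞ :=
    Filter.Eventually.of_forall fun x => lt_of_le_of_lt (hAb x) ENNReal.ofReal_lt_top
  have hBfin : ∀ᵐ x ∂Pi, B x < ∞ :=
    Filter.Eventually.of_forall fun x => lt_of_le_of_lt (hBb x) ENNReal.ofReal_lt_top
  rw [hsplit, integral_toReal hmA.aemeasurable hAfin, integral_toReal hmB.aemeasurable hBfin,
    lintegral_invariant Pi κ hinv (f := fun y => ENNReal.ofReal (φ y))
      (ENNReal.measurable_ofReal.comp hφ),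
    lintegral_invariant Pi κ hinv (f := fun y => ENNReal.ofReal (-φ y))
      (ENNReal.measurable_ofReal.comp hφ.neg),
    ← integral_eq_lintegral_pos_part_sub_lintegral_neg_part
      (my_integrable_of_bounded hφ.aestronglyMeasurable hb)]

noncomputable def iterK (p : ℕ → Kernel E E) : ℕ → ℕ → (E → ℝ) → (E → ℝ)
  | 0, _, φ => φ
  | (m+1), i, φ => iterK p m i (kerAct (p (i+m+1)) φ)

lemma iterK_measurable (p : ℕ → Kernel E E) [∀ i, IsMarkovKernel (p i)] :
    ∀ (m i : ℕ) (φ : E → ℝ), Measurable φ → Measurable (iterK p m i φ)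
  | 0, _, φ, hφ => hφ
  | (m+1), i, φ, hφ =>
      iterK_measurable p m i _ (kerAct_measurable _ hφ)

lemma iterK_bound_center (Pi : Measure E) [IsProbabilityMeasure Pi]
    (p : ℕ → Kernel E E) [∀ i, IsMarkovKernel (p i)]
    (hinv : ∀ i ≥ 1, ∀ A : Set E, MeasurableSet A → ∫⁻ x, p i x A ∂Pi = Pi A)
    {β : ℝ} (hβ0 : 0 < β) (hβ1 : β ≤ 1)
    (hminor : ∀ i ≥ 1, ∀ x : E, ∀ A : Set E, MeasurableSet A →
      ENNReal.ofReal β * Pi A ≤ p i x A) :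
    ∀ (m i : ℕ) (φ : E → ℝ) (M : ℝ), Measurable φ → (∀ y, |φ y| ≤ M) →
      (∫ y, φ y ∂Pi = 0) →
      (∀ x, |iterK p m i φ x| ≤ (1-β)^m * M) ∧ (∫ x, iterK p m i φ x ∂Pi = 0) := by
  intro m
  induction m with
  | zero => intro i φ M hφ hb hc; simpa [iterK] using ⟨hb, hc⟩
  | succ m ih =>
    intro i φ M hφ hb hc
    have hb' : ∀ x, |kerAct (p (i+m+1)) φ x| ≤ (1-β) * M :=
      kerAct_contract Pi (p (i+m+1)) hβ0
        (fun x A hA => hminor (i+m+1) (Nat.le_add_left 1 (i+m)) x A hA) hφ hb hc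
    have hc' : ∫ x, kerAct (p (i+m+1)) φ x ∂Pi = 0 := by
      rw [integral_invariant Pi (p (i+m+1))
        (fun A hA => hinv (i+m+1) (Nat.le_add_left 1 (i+m)) A hA) hφ hb]
      exact hc
    have := ih i (kerAct (p (i+m+1)) φ) ((1-β)*M) (kerAct_measurable _ hφ) hb' hc'
    refine ⟨fun x => ?_, this.2⟩
    have h1 := this.1 x
    calc |iterK p (m+1) i φ x| = |iterK p m i (kerAct (p (i+m+1)) φ) x| := rfl
      _ ≤ (1-β)^m * ((1-β)*M) := h1
      _ = (1-β)^(m+1) * M := by ring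

/-- iterated Markov property -/
lemma step_iter (p : ℕ → Kernel E E) [∀ i, IsMarkovKernel (p i)]
    (μ : Measure (ℕ → E)) [IsProbabilityMeasure μ]
    (hmarkov : ∀ n : ℕ, ∀ g : (ℕ → E) → ℝ, Measurable g → (∀ ω, |g ω| ≤ 1) →
      (∀ ω ω' : ℕ → E, (∀ i ≤ n, ω i = ω' i) → g ω = g ω') →
      ∀ A : Set E, MeasurableSet A →
        ∫ ω, g ω * Set.indicator A (fun _ => (1 : ℝ)) (ω (n + 1)) ∂μ
          = ∫ ω, g ω * (p (n + 1) (ω n) A).toReal ∂μ) :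
    ∀ (m i : ℕ) (φ : E → ℝ) (M : ℝ), Measurable φ → (∀ y, |φ y| ≤ M) →
      ∀ g : (ℕ → E) → ℝ, Measurable g → (∀ ω, |g ω| ≤ 1) →
      (∀ ω ω' : (ℕ → E), (∀ k ≤ i, ω k = ω' k) → g ω = g ω') →
      ∫ ω, g ω * φ (ω (i + m)) ∂μ = ∫ ω, g ω * iterK p m i φ (ω i) ∂μ := by
  intro m
  induction m with
  | zero => intro i φ M hφ hb g hg hg1 hgpast; simp [iterK]
  | succ m ih =>
    intro i φ M hφ hb g hg hg1 hgpast
    have hgpast' : ∀ ω ω' : (ℕ → E), (∀ k ≤ i + m, ω k = ω' k) → g ω = g ω' :=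
      fun ω ω' hk => hgpast ω ω' fun k hk' => hk k (le_trans hk' (Nat.le_add_right i m))
    have h1 := step_one p μ hmarkov (i+m) g hg hg1 hgpast' φ hφ M hb
    have h2 := ih i (kerAct (p (i+m+1)) φ) M (kerAct_measurable _ hφ)
      (kerAct_bound _ hφ hb) g hg hg1 hgpast
    calc ∫ ω, g ω * φ (ω (i + (m+1))) ∂μ
        = ∫ ω, g ω * φ (ω ((i + m) + 1)) ∂μ := by ring_nf
      _ = ∫ ω, g ω * kerAct (p ((i+m)+1)) φ (ω (i+m)) ∂μ := h1
      _ = ∫ ω, g ω * iterK p m i (kerAct (p (i+m+1)) φ) (ω i) ∂μ := h2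
      _ = ∫ ω, g ω * iterK p (m+1) i φ (ω i) ∂μ := rfl

end Aux

/-- **Theorem 2, Strong law of large numbers.**
Let `(xₙ)` be the time-inhomogeneous Markov chain with initial point `x₀` and
transition kernels `pᵢ` (each leaving `Π` invariant), realized on the canonical
path space `ℕ → E` by a probability measure `μ` satisfying the Markov property.
Under the minorization condition `pᵢ(x, A) ≥ β Π(A)`, for every bounded measurable
`h : E → ℝ`, `Sₙ/n → ∫ h dΠ` almost surely, where `Sₙ = ∑_{i=1}^n h(xᵢ)`. -/
theorem strong_law_of_large_numbers_of_minorization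
    {E : Type*} [MeasurableSpace E]
    (Pi : Measure E) [IsProbabilityMeasure Pi]
    (p : ℕ → Kernel E E) [∀ i, IsMarkovKernel (p i)]
    (hinv : ∀ i ≥ 1, ∀ A : Set E, MeasurableSet A → ∫⁻ x, p i x A ∂Pi = Pi A)
    (β : ℝ) (hβ0 : 0 < β) (hβ1 : β < 1)
    (hminor : ∀ i ≥ 1, ∀ x : E, ∀ A : Set E, MeasurableSet A →
      ENNReal.ofReal β * Pi A ≤ p i x A)
    (h : E → ℝ) (hmeas : Measurable h) (hmax : ℝ) (hbd : ∀ x, |h x| ≤ hmax)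
    (x₀ : E)
    -- `μ` is the law of the chain on the canonical path space (Ionescu–Tulcea):
    (μ : Measure (ℕ → E)) [IsProbabilityMeasure μ]
    (hstart : ∀ᵐ ω ∂μ, ω 0 = x₀)
    -- the Markov property: conditionally on the past up to time `n`, the state at
    -- time `n+1` is drawn from `p (n+1) (ω n)`:
    (hmarkov : ∀ n : ℕ, ∀ g : (ℕ → E) → ℝ, Measurable g → (∀ ω, |g ω| ≤ 1) →
      (∀ ω ω' : ℕ → E, (∀ i ≤ n, ω i = ω' i) → g ω = g ω') →
      ∀ A : Set E, MeasurableSet A →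
        ∫ ω, g ω * Set.indicator A (fun _ => (1 : ℝ)) (ω (n + 1)) ∂μ
          = ∫ ω, g ω * (p (n + 1) (ω n) A).toReal ∂μ) :
    ∀ᵐ ω ∂μ, Tendsto
      (fun n : ℕ => (∑ i ∈ Finset.Icc 1 n, h (ω i)) / n)
      atTop (nhds (∫ x, h x ∂Pi)) := by
  classical
  set c : ℝ := ∫ x, h x ∂Pi with hc
  set f : E → ℝ := fun x => h x - c with hfdef
  have hmeasf : Measurable f := hmeas.sub measurable_const
  have hmax0 : 0 ≤ hmax := le_trans (abs_nonneg _) (hbd x₀)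
  set M : ℝ := 2 * hmax + 1 with hMdef
  have hM0 : 0 < M := by positivity
  have hinth : Integrable h Pi := my_integrable_of_bounded hmeas.aestronglyMeasurable hbd
  have hcb : |c| ≤ hmax := by
    rw [hc]
    calc |∫ x, h x ∂Pi| ≤ ∫ x, |h x| ∂Pi := by
          simpa [Real.norm_eq_abs] using norm_integral_le_integral_norm (μ := Pi) h
      _ ≤ ∫ _, hmax ∂Pi := integral_mono_of_nonneg
          (Filter.Eventually.of_forall fun y => abs_nonneg _)
          (integrable_const hmax) (Filter.Eventually.of_forall hbd)
      _ = hmax := by simp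
  have hfb : ∀ x, |f x| ≤ M := by
    intro x
    calc |f x| ≤ |h x| + |c| := abs_sub _ _
      _ ≤ hmax + hmax := add_le_add (hbd x) hcb
      _ ≤ M := by rw [hMdef]; linarith
  have hfc : ∫ y, f y ∂Pi = 0 := by
    rw [hfdef]
    rw [integral_sub hinth (integrable_const c)]
    simp [hc]
  set r : ℝ := 1 - β with hrdef
  have hr0 : 0 ≤ r := by rw [hrdef]; linarith
  have hr1 : r < 1 := by rw [hrdef]; linarith
  -- covariance bound
  have cov : ∀ i j : ℕ, i ≤ j → |∫ ω, f (ω i) * f (ω j) ∂μ| ≤ M^2 * r^(j-i) := by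
    intro i j hij
    set g : (ℕ → E) → ℝ := fun ω => f (ω i) / M with hgdef
    have hg : Measurable g := (hmeasf.comp (measurable_pi_apply i)).div_const M
    have hg1 : ∀ ω, |g ω| ≤ 1 := by
      intro ω
      rw [hgdef]
      rw [abs_div, abs_of_pos hM0, div_le_one hM0]
      exact hfb _
    have hgpast : ∀ ω ω' : (ℕ → E), (∀ k ≤ i, ω k = ω' k) → g ω = g ω' := by
      intro ω ω' hk
      simp only [hgdef, hk i le_rfl]
    have key := step_iter p μ hmarkov (j - i) i f M hmeasf hfb g hg hg1 hgpast
    rw [Nat.add_sub_cancel' hij] at key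
    set Q : E → ℝ := iterK p (j - i) i f with hQdef
    have hQb : ∀ x, |Q x| ≤ r^(j-i) * M :=
      (iterK_bound_center Pi p hinv hβ0 hβ1.le hminor (j-i) i f M hmeasf hfb hfc).1
    have heq : ∫ ω, f (ω i) * f (ω j) ∂μ = M * ∫ ω, g ω * Q (ω i) ∂μ := by
      rw [← key, ← integral_const_mul]
      refine integral_congr_ae (Filter.Eventually.of_forall fun ω => ?_)
      rw [hgdef]
      field_simp
    rw [heq, abs_mul, abs_of_pos hM0]
    have habs : |∫ ω, g ω * Q (ω i) ∂μ| ≤ r^(j-i) * M := by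
      have hrM : 0 ≤ r^(j-i) * M := mul_nonneg (pow_nonneg hr0 _) hM0.le
      calc |∫ ω, g ω * Q (ω i) ∂μ| ≤ ∫ ω, |g ω| * |Q (ω i)| ∂μ := by
            simpa [Real.norm_eq_abs, abs_mul] using
              norm_integral_le_integral_norm (μ := μ) (fun ω => g ω * Q (ω i))
        _ ≤ ∫ _, r^(j-i) * M ∂μ := by
            refine integral_mono_of_nonneg
              (Filter.Eventually.of_forall fun ω =>
                mul_nonneg (abs_nonneg _) (abs_nonneg _))
              (integrable_const _) (Filter.Eventually.of_forall fun ω => ?_)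
            show |g ω| * |Q (ω i)| ≤ r^(j-i) * M
            calc |g ω| * |Q (ω i)| ≤ 1 * (r^(j-i) * M) :=
                  mul_le_mul (hg1 ω) (hQb _) (abs_nonneg _) zero_le_one
              _ = r^(j-i) * M := one_mul _
        _ = r^(j-i) * M := by simp
    calc M * |∫ ω, g ω * Q (ω i) ∂μ| ≤ M * (r^(j-i) * M) :=
          mul_le_mul_of_nonneg_left habs hM0.le
      _ = M^2 * r^(j-i) := by ring
  have covd : ∀ i j : ℕ, |∫ ω, f (ω i) * f (ω j) ∂μ| ≤ M^2 * r^(Nat.dist i j) := by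
    intro i j
    rcases le_total i j with hij | hij
    · rw [Nat.dist_eq_sub_of_le hij]; exact cov i j hij
    · rw [Nat.dist_eq_sub_of_le_right hij]
      have := cov j i hij
      have hcomm : ∫ ω, f (ω i) * f (ω j) ∂μ = ∫ ω, f (ω j) * f (ω i) ∂μ := by
        refine integral_congr_ae (Filter.Eventually.of_forall fun ω => ?_)
        ring
      rw [hcomm]
      exact this
  -- geometric sum bounds
  have geo : ∀ k : ℕ, ∑ d ∈ Finset.range k, r^d ≤ 1/β := by
    intro k
    have hrne : r ≠ 1 := ne_of_lt hr1
    rw [geom_sum_eq hrne]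
    have h1 : (r^k - 1)/(r - 1) = (1 - r^k)/β := by
      have hb : r - 1 = -β := by rw [hrdef]; ring
      rw [hb, div_neg, ← neg_div]
      congr 1
      ring
    rw [h1]
    have hk0 : 0 ≤ r^k := pow_nonneg hr0 _
    have hk1 : r^k ≤ 1 := pow_le_one₀ hr0 hr1.le
    rw [div_le_div_iff₀ hβ0 hβ0]
    nlinarith
  have inner : ∀ n i : ℕ, ∑ j ∈ Finset.Ioc 0 n, r^(Nat.dist i j) ≤ 2/β := by
    intro n i
    classical
    rw [← Finset.sum_filter_add_sum_filter_not (Finset.Ioc 0 n) (fun j => j ≤ i)]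
    have hgen : ∀ (s : Finset ℕ) (e : ℕ → ℕ) (K : ℕ),
        (∀ a ∈ s, ∀ b ∈ s, e a = e b → a = b) → (∀ a ∈ s, e a < K) →
        (∀ a ∈ s, Nat.dist i a = e a) →
        ∑ j ∈ s, r^(Nat.dist i j) ≤ 1/β := by
      intro s e K hinj hK hdist
      have h1 : ∑ j ∈ s, r^(Nat.dist i j) = ∑ j ∈ s, r^(e j) :=
        Finset.sum_congr rfl fun j hj => by rw [hdist j hj]
      have h2 : ∑ d ∈ s.image e, r^d = ∑ j ∈ s, r^(e j) :=
        Finset.sum_image hinj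
      rw [h1, ← h2]
      calc ∑ d ∈ s.image e, r^d ≤ ∑ d ∈ Finset.range K, r^d := by
            refine Finset.sum_le_sum_of_subset_of_nonneg ?_
              (fun d _ _ => pow_nonneg hr0 _)
            intro d hd
            rw [Finset.mem_image] at hd
            obtain ⟨j, hj, rfl⟩ := hd
            rw [Finset.mem_range]
            exact hK j hj
        _ ≤ 1/β := geo _
    have h1 : ∑ j ∈ (Finset.Ioc 0 n).filter (fun j => j ≤ i), r^(Nat.dist i j) ≤ 1/β := by
      refine hgen _ (fun j => i - j) (i+1) ?_ ?_ ?_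
      · intro a ha b hb hab
        rw [Finset.mem_filter, Finset.mem_Ioc] at ha hb
        omega
      · intro a ha
        omega
      · intro a ha
        rw [Finset.mem_filter] at ha
        exact Nat.dist_eq_sub_of_le_right ha.2
    have h2 : ∑ j ∈ (Finset.Ioc 0 n).filter (fun j => ¬ j ≤ i), r^(Nat.dist i j) ≤ 1/β := by
      refine hgen _ (fun j => j - i) (n+1) ?_ ?_ ?_
      · intro a ha b hb hab
        rw [Finset.mem_filter, Finset.mem_Ioc] at ha hb
        omega
      · intro a ha
        rw [Finset.mem_filter, Finset.mem_Ioc] at ha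
        omega
      · intro a ha
        rw [Finset.mem_filter] at ha
        exact Nat.dist_eq_sub_of_le (by omega)
    have : 2/β = 1/β + 1/β := by ring
    rw [this]
    exact add_le_add h1 h2
  -- second moment bound
  set S : ℕ → (ℕ → E) → ℝ := fun n ω => ∑ j ∈ Finset.Ioc 0 n, f (ω j) with hSdef
  have hSmeas : ∀ n, Measurable (S n) := by
    intro n
    exact Finset.measurable_sum _ fun j _ => hmeasf.comp (measurable_pi_apply j)
  have hSbd : ∀ n ω, |S n ω| ≤ n * M := by
    intro n ω
    calc |S n ω| ≤ ∑ j ∈ Finset.Ioc 0 n, |f (ω j)| := Finset.abs_sum_le_sum_abs _ _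
      _ ≤ ∑ _j ∈ Finset.Ioc 0 n, M := Finset.sum_le_sum fun j _ => hfb _
      _ = n * M := by simp [Nat.card_Ioc]
  have hSmom : ∀ n : ℕ, ∫ ω, (S n ω)^2 ∂μ ≤ n * (M^2 * (2/β)) := by
    intro n
    have hexp : ∀ ω : ℕ → E, (S n ω)^2
        = ∑ i ∈ Finset.Ioc 0 n, ∑ j ∈ Finset.Ioc 0 n, f (ω i) * f (ω j) := by
      intro ω
      simp only [hSdef]
      rw [pow_two, Finset.sum_mul_sum]
    have hintprod : ∀ i j : ℕ, Integrable (fun ω => f (ω i) * f (ω j)) μ := by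
      intro i j
      refine my_integrable_of_bounded
        (((hmeasf.comp (measurable_pi_apply i)).mul
          (hmeasf.comp (measurable_pi_apply j))).aestronglyMeasurable)
        (M := M * M) fun ω => ?_
      rw [abs_mul]
      exact mul_le_mul (hfb _) (hfb _) (abs_nonneg _) hM0.le
    calc ∫ ω, (S n ω)^2 ∂μ
        = ∑ i ∈ Finset.Ioc 0 n, ∑ j ∈ Finset.Ioc 0 n, ∫ ω, f (ω i) * f (ω j) ∂μ := by
          rw [integral_congr_ae (Filter.Eventually.of_forall hexp),
            integral_finset_sum _
              (fun i _ => integrable_finset_sum _ (fun j _ => hintprod i j))]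
          exact Finset.sum_congr rfl fun i _ =>
            integral_finset_sum _ fun j _ => hintprod i j
      _ ≤ ∑ i ∈ Finset.Ioc 0 n, ∑ j ∈ Finset.Ioc 0 n, M^2 * r^(Nat.dist i j) :=
          Finset.sum_le_sum fun i _ => Finset.sum_le_sum fun j _ =>
            le_trans (le_abs_self _) (covd i j)
      _ = ∑ i ∈ Finset.Ioc 0 n, M^2 * ∑ j ∈ Finset.Ioc 0 n, r^(Nat.dist i j) :=
          Finset.sum_congr rfl fun i _ => (Finset.mul_sum _ _ _).symm
      _ ≤ ∑ _i ∈ Finset.Ioc 0 n, M^2 * (2/β) :=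
          Finset.sum_le_sum fun i _ =>
            mul_le_mul_of_nonneg_left (inner n i) (by positivity)
      _ = n * (M^2 * (2/β)) := by simp [Nat.card_Ioc]
  set T : ℕ → (ℕ → E) → ℝ := fun n ω => S n ω / n with hTdef
  have hTmeas : ∀ n, Measurable (T n) := fun n => (hSmeas n).div_const _
  set C : ℝ := M^2 * (2/β) with hCdef
  have hC0 : 0 < C := by positivity
  have hTbd : ∀ n ω, |T n ω| ≤ M := by
    intro n ω
    rcases Nat.eq_zero_or_pos n with rfl | hn
    · simp [hTdef, hSdef]
      positivity
    · have hn0 : (0:ℝ) < n := by exact_mod_cast hn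
      simp only [hTdef]
      rw [abs_div, abs_of_pos hn0, div_le_iff₀ hn0]
      calc |S n ω| ≤ n * M := hSbd n ω
        _ = M * n := by ring
  have hTint2 : ∀ n, Integrable (fun ω => (T n ω)^2) μ := by
    intro n
    refine my_integrable_of_bounded (((hTmeas n).pow_const 2).aestronglyMeasurable)
      (M := M^2) fun ω => ?_
    rw [abs_of_nonneg (sq_nonneg _)]
    calc (T n ω)^2 = |T n ω|^2 := (sq_abs _).symm
      _ ≤ M^2 := pow_le_pow_left₀ (abs_nonneg _) (hTbd n ω) 2
  have hTmom : ∀ n : ℕ, 1 ≤ n → ∫ ω, (T n ω)^2 ∂μ ≤ C / n := by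
    intro n hn
    have hn0 : (0:ℝ) < n := by exact_mod_cast hn
    have heq : ∀ ω, (T n ω)^2 = (S n ω)^2 / (n:ℝ)^2 := by
      intro ω; simp only [hTdef]; rw [div_pow]
    calc ∫ ω, (T n ω)^2 ∂μ = (∫ ω, (S n ω)^2 ∂μ) / (n:ℝ)^2 := by
          rw [integral_congr_ae (Filter.Eventually.of_forall heq), integral_div]
      _ ≤ ((n:ℝ) * C) / (n:ℝ)^2 := by
          have h1 := hSmom n
          gcongr
      _ = C / n := by field_simp
  have hae1 : ∀ᵐ ω ∂μ, Tendsto (fun m => T (m^2) ω) atTop (nhds 0) := by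
    have hmeasG : ∀ m : ℕ, Measurable fun ω => ENNReal.ofReal ((T (m^2) ω)^2) :=
      fun m => ENNReal.measurable_ofReal.comp ((hTmeas (m^2)).pow_const 2)
    have hkey : ∫⁻ ω, ∑' m : ℕ, ENNReal.ofReal ((T (m^2) ω)^2) ∂μ < ⊤ := by
      rw [lintegral_tsum fun m => (hmeasG m).aemeasurable]
      have hbound : ∀ m : ℕ, ∫⁻ ω, ENNReal.ofReal ((T (m^2) ω)^2) ∂μ
          ≤ ENNReal.ofReal (C / (m:ℝ)^2) := by
        intro m
        rcases Nat.eq_zero_or_pos m with rfl | hm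
        · have hz : ∀ ω : ℕ → E, T (0^2) ω = 0 := by
            intro ω; simp [hTdef, hSdef]
          simp only [hz]
          simp
        · have h1 : ∫⁻ ω, ENNReal.ofReal ((T (m^2) ω)^2) ∂μ
              = ENNReal.ofReal (∫ ω, (T (m^2) ω)^2 ∂μ) :=
            (ofReal_integral_eq_lintegral_ofReal (hTint2 (m^2))
              (Filter.Eventually.of_forall fun ω => sq_nonneg _)).symm
          rw [h1]
          apply ENNReal.ofReal_le_ofReal
          have h2 := hTmom (m^2) (Nat.one_le_pow _ _ hm)
          calc ∫ ω, (T (m^2) ω)^2 ∂μ ≤ C / ((m^2 : ℕ):ℝ) := h2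
            _ = C / (m:ℝ)^2 := by push_cast; ring_nf
      calc ∑' m : ℕ, ∫⁻ ω, ENNReal.ofReal ((T (m^2) ω)^2) ∂μ
          ≤ ∑' m : ℕ, ENNReal.ofReal (C / (m:ℝ)^2) := ENNReal.tsum_le_tsum hbound
        _ < ⊤ := by
            have hsummable : Summable (fun m : ℕ => C / (m:ℝ)^2) := by
              have hs := Real.summable_one_div_nat_pow.2 (by norm_num : 2 ≤ 2)
              have := hs.mul_left C
              simpa [div_eq_mul_inv, one_div] using this
            rw [← ENNReal.ofReal_tsum_of_nonneg (fun m => by positivity) hsummable]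
            exact ENNReal.ofReal_lt_top
    have hfin := ae_lt_top (Measurable.ennreal_tsum hmeasG) hkey.ne
    filter_upwards [hfin] with ω hω
    have hsummable : Summable fun m : ℕ => (T (m^2) ω)^2 := by
      have := ENNReal.summable_toReal hω.ne
      simpa [ENNReal.toReal_ofReal (sq_nonneg _)] using this
    have hsq : Tendsto (fun m => (T (m^2) ω)^2) atTop (nhds 0) :=
      hsummable.tendsto_atTop_zero
    have habs : Tendsto (fun m => |T (m^2) ω|) atTop (nhds 0) := by
      have := (Real.continuous_sqrt.tendsto' 0 0 (by simp)).comp hsq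
      simpa [Function.comp_def, Real.sqrt_sq_eq_abs] using this
    exact squeeze_zero_norm (fun m => le_of_eq (Real.norm_eq_abs _)) habs
  filter_upwards [hae1] with ω hω
  have hTtend : Tendsto (fun n => T n ω) atTop (nhds 0) := by
    have hms : Tendsto (fun n : ℕ => Nat.sqrt n) atTop atTop := by
      refine tendsto_atTop_atTop.2 fun b => ⟨b^2, fun n hn => ?_⟩
      calc b = Nat.sqrt (b^2) := (Nat.sqrt_eq' b).symm
        _ ≤ Nat.sqrt n := Nat.sqrt_le_sqrt hn
    have habs : Tendsto (fun m => |T (m^2) ω|) atTop (nhds 0) := by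
      have := hω.abs
      simpa using this
    have h1 : Tendsto (fun n => |T ((Nat.sqrt n)^2) ω|) atTop (nhds 0) := habs.comp hms
    have h2 : Tendsto (fun n : ℕ => 2*M/((Nat.sqrt n : ℕ) : ℝ)) atTop (nhds 0) :=
      Tendsto.div_atTop tendsto_const_nhds (tendsto_natCast_atTop_atTop.comp hms)
    have h3 : Tendsto (fun n : ℕ => |T ((Nat.sqrt n)^2) ω| + 2*M/((Nat.sqrt n : ℕ) : ℝ))
        atTop (nhds 0) := by
      simpa using h1.add h2
    refine squeeze_zero_norm' ?_ h3
    filter_upwards [eventually_ge_atTop 1] with n hn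
    set m : ℕ := Nat.sqrt n with hmdef
    have hm1 : 1 ≤ m := Nat.le_sqrt.2 (by omega)
    have hm2 : m^2 ≤ n := Nat.sqrt_le' n
    have hm3 : n < (m+1)^2 := Nat.lt_succ_sqrt' n
    have hmr : (0:ℝ) < (m:ℝ) := by exact_mod_cast hm1
    have hm2r : ((m:ℝ))^2 ≤ (n:ℝ) := by exact_mod_cast hm2
    have hnr : (0:ℝ) < (n:ℝ) := by exact_mod_cast hn
    have hsplit : S n ω = S (m^2) ω + ∑ j ∈ Finset.Ioc (m^2) n, f (ω j) := by
      simp only [hSdef]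
      exact (Finset.sum_Ioc_consecutive _ (Nat.zero_le _) hm2).symm
    have htail : |∑ j ∈ Finset.Ioc (m^2) n, f (ω j)| ≤ (2*(m:ℝ)) * M := by
      calc |∑ j ∈ Finset.Ioc (m^2) n, f (ω j)|
          ≤ ∑ j ∈ Finset.Ioc (m^2) n, |f (ω j)| := Finset.abs_sum_le_sum_abs _ _
        _ ≤ ∑ _j ∈ Finset.Ioc (m^2) n, M := Finset.sum_le_sum fun j _ => hfb _
        _ = ((n - m^2 : ℕ) : ℝ) * M := by simp [Nat.card_Ioc]
        _ ≤ (2*(m:ℝ)) * M := by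
            have hcard : (n - m^2 : ℕ) ≤ 2*m := by
              have hx : (m+1)^2 = m^2 + 2*m + 1 := by ring
              omega
            have : ((n - m^2 : ℕ) : ℝ) ≤ 2*(m:ℝ) := by exact_mod_cast hcard
            exact mul_le_mul_of_nonneg_right this hM0.le
    have hSn : |S n ω| ≤ |S (m^2) ω| + 2*(m:ℝ)*M := by
      rw [hsplit]
      calc |S (m^2) ω + ∑ j ∈ Finset.Ioc (m^2) n, f (ω j)|
          ≤ |S (m^2) ω| + |∑ j ∈ Finset.Ioc (m^2) n, f (ω j)| := abs_add_le _ _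
        _ ≤ |S (m^2) ω| + 2*(m:ℝ)*M := by
            have := htail
            linarith
    have hTm : |T (m^2) ω| = |S (m^2) ω|/((m:ℝ))^2 := by
      simp only [hTdef]
      rw [abs_div]
      congr 1
      · push_cast
        rw [abs_of_pos (by positivity)]
    rw [Real.norm_eq_abs]
    have hTn : |T n ω| ≤ (|S (m^2) ω| + 2*(m:ℝ)*M)/(n:ℝ) := by
      simp only [hTdef]
      rw [abs_div, abs_of_pos hnr]
      gcongr
    calc |T n ω| ≤ (|S (m^2) ω| + 2*(m:ℝ)*M)/(n:ℝ) := hTn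
      _ = |S (m^2) ω|/(n:ℝ) + 2*(m:ℝ)*M/(n:ℝ) := add_div _ _ _
      _ ≤ |S (m^2) ω|/((m:ℝ))^2 + 2*(m:ℝ)*M/((m:ℝ))^2 := by
          have hm2pos : (0:ℝ) < ((m:ℝ))^2 := by positivity
          have hc1 : |S (m^2) ω|/(n:ℝ) ≤ |S (m^2) ω|/((m:ℝ))^2 :=
            div_le_div_of_nonneg_left (abs_nonneg _) hm2pos hm2r
          have hc2 : 2*(m:ℝ)*M/(n:ℝ) ≤ 2*(m:ℝ)*M/((m:ℝ))^2 :=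
            div_le_div_of_nonneg_left (by positivity) hm2pos hm2r
          linarith
      _ = |T (m^2) ω| + 2*M/((m:ℕ):ℝ) := by
          rw [hTm]
          congr 1
          field_simp
  have h4 : Tendsto (fun n => T n ω + c) atTop (nhds (0 + c)) :=
    hTtend.add_const c
  rw [zero_add] at h4
  refine h4.congr' ?_
  filter_upwards [eventually_ge_atTop 1] with n hn
  have hn0 : ((n:ℝ)) ≠ 0 := by
    have : (0:ℝ) < n := by exact_mod_cast hn
    exact ne_of_gt this
  have hIcc : Finset.Icc 1 n = Finset.Ioc 0 n := rfl
  have hsum : ∑ i ∈ Finset.Icc 1 n, h (ω i) = S n ω + (n:ℝ) * c := by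
    rw [hIcc]
    simp only [hSdef]
    have : ∀ i : ℕ, h (ω i) = f (ω i) + c := by
      intro i; simp [hfdef]
    rw [Finset.sum_congr rfl fun i _ => this i, Finset.sum_add_distrib]
    simp [Nat.card_Ioc, mul_comm]
  show T n ω + c = (∑ i ∈ Finset.Icc 1 n, h (ω i)) / n
  rw [hsum]
  simp only [hTdef]
  field_simp
end

section
/- (Variance bound in the proof of Theorem 2.) Suppose the minorization condition holds with constant β ∈ (0,1), i.e. p_i(x, A) ≥ β Π(A) for all i ≥ 1, all x ∈ E and all measurable A. Let h : E → ℝ be a bounded measurable function and let (x_n)_{n≥0} be the time-inhomogeneous Markov chain with initial distribution μ₀ and transitions p_i. Then there is a constant C (depending only on β and sup|h|) such that Var(S_n / n) ≤ C / n for all n ≥ 1, where S_n = Σ_{i=1}^n h(x_i). -/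
open MeasureTheory ProbabilityTheory
open scoped ENNReal

section Aux
variable {α : Type*} [MeasurableSpace α]

lemma integrable_of_abs_le (μ : Measure α) [IsFiniteMeasure μ] {f : α → ℝ}
    (hf : AEStronglyMeasurable f μ) (M : ℝ) (hb : ∀ x, |f x| ≤ M) : Integrable f μ :=
  (integrable_const M).mono' hf (Filter.Eventually.of_forall fun x => by
    simpa [Real.norm_eq_abs] using hb x)

lemma abs_integral_le (μ : Measure α) [IsProbabilityMeasure μ] {f : α → ℝ}
    (M : ℝ) (hb : ∀ x, |f x| ≤ M) : |∫ x, f x ∂μ| ≤ M := by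
  have := norm_integral_le_of_norm_le_const (μ := μ) (f := f) (C := M)
    (Filter.Eventually.of_forall fun x => by simpa [Real.norm_eq_abs] using hb x)
  simpa [Real.norm_eq_abs] using this
end Aux

section Chain
variable {E : Type} [MeasurableSpace E]

lemma kernel_integral_measurable (κ : Kernel E E) [IsMarkovKernel κ] {f : E → ℝ}
    (hf : Measurable f) : Measurable fun x => ∫ y, f y ∂(κ x) := by
  have : StronglyMeasurable fun x => ∫ y, f y ∂(κ x) :=
    StronglyMeasurable.integral_kernel_prod_right (κ := κ) (f := fun _ y => f y)
      (hf.stronglyMeasurable.comp_measurable measurable_snd)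
  exact this.measurable

lemma markov_step (p : ℕ → Kernel E E) [∀ i, IsMarkovKernel (p i)]
    (μ : Measure (ℕ → E)) [IsProbabilityMeasure μ]
    (hM : ∀ n : ℕ, ∀ g : (ℕ → E) → ℝ, Measurable g → (∀ ω, |g ω| ≤ 1) →
        (∀ ω ω' : ℕ → E, (∀ i ≤ n, ω i = ω' i) → g ω = g ω') →
        ∀ A : Set E, MeasurableSet A →
          ∫ ω, g ω * Set.indicator A (fun _ => (1 : ℝ)) (ω (n + 1)) ∂μ
            = ∫ ω, g ω * (p (n + 1) (ω n) A).toReal ∂μ)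
    (n : ℕ) (g : (ℕ → E) → ℝ) (hg : Measurable g) (hgb : ∀ ω, |g ω| ≤ 1)
    (hgd : ∀ ω ω' : (ℕ → E), (∀ i ≤ n, ω i = ω' i) → g ω = g ω')
    (f : E → ℝ) (hf : Measurable f) (M : ℝ) (hM0 : 0 ≤ M) (hfb : ∀ x, |f x| ≤ M) :
    ∫ ω, g ω * f (ω (n + 1)) ∂μ = ∫ ω, g ω * ∫ y, f y ∂(p (n + 1) (ω n)) ∂μ := by
  have hsimple : ∀ s : SimpleFunc E ℝ,
      ∫ ω, g ω * s (ω (n + 1)) ∂μ = ∫ ω, g ω * ∫ y, s y ∂(p (n + 1) (ω n)) ∂μ := by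
    intro s
    induction s using SimpleFunc.induction with
    | @const c A hA =>
      have hcoe : ∀ x : E, (SimpleFunc.piecewise A hA (SimpleFunc.const E c)
          (SimpleFunc.const E 0)) x = c * Set.indicator A (fun _ => (1 : ℝ)) x := by
        intro x
        by_cases hx : x ∈ A <;> simp [SimpleFunc.piecewise_apply, Set.indicator, hx]
      have base := hM n g hg hgb hgd A hA
      have hinner : ∀ ω : ℕ → E, ∫ y, (SimpleFunc.piecewise A hA (SimpleFunc.const E c)
          (SimpleFunc.const E 0)) y ∂(p (n + 1) (ω n))
          = c * (p (n + 1) (ω n) A).toReal := by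
        intro ω
        calc ∫ y, (SimpleFunc.piecewise A hA (SimpleFunc.const E c)
              (SimpleFunc.const E 0)) y ∂(p (n + 1) (ω n))
            = ∫ y, Set.indicator A (fun _ => c) y ∂(p (n + 1) (ω n)) := by
              refine integral_congr_ae (Filter.Eventually.of_forall fun y => ?_)
              rw [hcoe]
              by_cases hy : y ∈ A <;> simp [Set.indicator, hy]
          _ = c * (p (n + 1) (ω n) A).toReal := by
              rw [integral_indicator_const (c : ℝ) hA]; simp [mul_comm, measureReal_def]
      calc ∫ ω, g ω * (SimpleFunc.piecewise A hA (SimpleFunc.const E c)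
            (SimpleFunc.const E 0)) (ω (n + 1)) ∂μ
          = ∫ ω, c * (g ω * Set.indicator A (fun _ => (1 : ℝ)) (ω (n + 1))) ∂μ := by
            refine integral_congr_ae (Filter.Eventually.of_forall fun ω => ?_)
            dsimp only; rw [hcoe]; ring
        _ = c * ∫ ω, g ω * Set.indicator A (fun _ => (1 : ℝ)) (ω (n + 1)) ∂μ :=
            integral_const_mul c _
        _ = c * ∫ ω, g ω * (p (n + 1) (ω n) A).toReal ∂μ := by rw [base]
        _ = ∫ ω, c * (g ω * (p (n + 1) (ω n) A).toReal) ∂μ := (integral_const_mul c _).symm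
        _ = ∫ ω, g ω * ∫ y, (SimpleFunc.piecewise A hA (SimpleFunc.const E c)
              (SimpleFunc.const E 0)) y ∂(p (n + 1) (ω n)) ∂μ := by
            refine integral_congr_ae (Filter.Eventually.of_forall fun ω => ?_)
            dsimp only; rw [hinner]; ring
    | @add s₁ s₂ _ ih₁ ih₂ =>
      obtain ⟨M₁, hM₁⟩ := s₁.exists_forall_norm_le
      obtain ⟨M₂, hM₂⟩ := s₂.exists_forall_norm_le
      have habs₁ : ∀ x, |s₁ x| ≤ M₁ := fun x => by simpa [Real.norm_eq_abs] using hM₁ x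
      have habs₂ : ∀ x, |s₂ x| ≤ M₂ := fun x => by simpa [Real.norm_eq_abs] using hM₂ x
      -- integrability on path space of the two LHS pieces
      have hint : ∀ (s : SimpleFunc E ℝ) (Ms : ℝ), (∀ x, |s x| ≤ Ms) →
          Integrable (fun ω => g ω * s (ω (n + 1))) μ := by
        intro s Ms hMs
        refine integrable_of_abs_le μ ?_ Ms fun ω => ?_
        · exact (hg.mul (s.measurable.comp (measurable_pi_apply (n + 1)))).aestronglyMeasurable
        · calc |g ω * s (ω (n + 1))| = |g ω| * |s (ω (n + 1))| := abs_mul _ _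
            _ ≤ 1 * Ms := by
              have h0 : (0:ℝ) ≤ |s (ω (n+1))| := abs_nonneg _
              exact mul_le_mul (hgb ω) (hMs _) h0 zero_le_one
            _ = Ms := one_mul Ms
      have hintR : ∀ (s : SimpleFunc E ℝ) (Ms : ℝ), (∀ x, |s x| ≤ Ms) →
          Integrable (fun ω => g ω * ∫ y, s y ∂(p (n + 1) (ω n))) μ := by
        intro s Ms hMs
        refine integrable_of_abs_le μ ?_ (|Ms|) fun ω => ?_
        · exact (hg.mul ((kernel_integral_measurable (p (n+1)) s.measurable).comp
            (measurable_pi_apply n))).aestronglyMeasurable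
        · calc |g ω * ∫ y, s y ∂(p (n + 1) (ω n))|
              = |g ω| * |∫ y, s y ∂(p (n + 1) (ω n))| := abs_mul _ _
            _ ≤ 1 * |Ms| := by
              refine mul_le_mul (hgb ω) ?_ (abs_nonneg _) zero_le_one
              exact (abs_integral_le _ Ms hMs).trans (le_abs_self Ms)
            _ = |Ms| := one_mul _
      have hkint : ∀ (s : SimpleFunc E ℝ) (Ms : ℝ) (_ : ∀ x, |s x| ≤ Ms) (ν : Measure E)
          (_ : IsProbabilityMeasure ν), Integrable (fun y => s y) ν := by
        intro s Ms hMs ν hν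
        exact integrable_of_abs_le ν s.measurable.aestronglyMeasurable Ms hMs
      calc ∫ ω, g ω * (s₁ + s₂) (ω (n + 1)) ∂μ
          = ∫ ω, (g ω * s₁ (ω (n + 1)) + g ω * s₂ (ω (n + 1))) ∂μ := by
            refine integral_congr_ae (Filter.Eventually.of_forall fun ω => ?_)
            simp [SimpleFunc.coe_add, mul_add]
        _ = ∫ ω, g ω * s₁ (ω (n + 1)) ∂μ + ∫ ω, g ω * s₂ (ω (n + 1)) ∂μ :=
            integral_add (hint s₁ M₁ habs₁) (hint s₂ M₂ habs₂)
        _ = ∫ ω, g ω * ∫ y, s₁ y ∂(p (n + 1) (ω n)) ∂μ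
            + ∫ ω, g ω * ∫ y, s₂ y ∂(p (n + 1) (ω n)) ∂μ := by rw [ih₁, ih₂]
        _ = ∫ ω, (g ω * ∫ y, s₁ y ∂(p (n + 1) (ω n))
            + g ω * ∫ y, s₂ y ∂(p (n + 1) (ω n))) ∂μ :=
            (integral_add (hintR s₁ M₁ habs₁) (hintR s₂ M₂ habs₂)).symm
        _ = ∫ ω, g ω * ∫ y, (s₁ + s₂) y ∂(p (n + 1) (ω n)) ∂μ := by
            refine integral_congr_ae (Filter.Eventually.of_forall fun ω => ?_)
            dsimp only; rw [← mul_add]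
            congr 1
            rw [← integral_add (hkint s₁ M₁ habs₁ _ inferInstance)
              (hkint s₂ M₂ habs₂ _ inferInstance)]
            refine integral_congr_ae (Filter.Eventually.of_forall fun y => ?_)
            simp [SimpleFunc.coe_add]
  -- approximation
  have hsm : StronglyMeasurable f := hf.stronglyMeasurable
  set φ : ℕ → SimpleFunc E ℝ := hsm.approxBounded M with hφ
  have hφb : ∀ m x, |φ m x| ≤ M := fun m x => by
    simpa [Real.norm_eq_abs] using hsm.norm_approxBounded_le hM0 m x
  have hφt : ∀ x, Filter.Tendsto (fun m => φ m x) Filter.atTop (nhds (f x)) := fun x =>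
    hsm.tendsto_approxBounded_of_norm_le (by simpa [Real.norm_eq_abs] using hfb x)
  -- LHS convergence
  have hL : Filter.Tendsto (fun m => ∫ ω, g ω * φ m (ω (n + 1)) ∂μ) Filter.atTop
      (nhds (∫ ω, g ω * f (ω (n + 1)) ∂μ)) := by
    refine tendsto_integral_of_dominated_convergence (fun _ => M) ?_ (integrable_const M) ?_ ?_
    · intro m
      exact (hg.mul ((φ m).measurable.comp (measurable_pi_apply (n + 1)))).aestronglyMeasurable
    · intro m
      refine Filter.Eventually.of_forall fun ω => ?_
      rw [Real.norm_eq_abs, abs_mul]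
      calc |g ω| * |φ m (ω (n + 1))| ≤ 1 * M :=
            mul_le_mul (hgb ω) (hφb m _) (abs_nonneg _) zero_le_one
        _ = M := one_mul M
    · refine Filter.Eventually.of_forall fun ω => ?_
      exact (tendsto_const_nhds.mul (hφt (ω (n + 1))))
  -- RHS convergence
  have hR : Filter.Tendsto (fun m => ∫ ω, g ω * ∫ y, φ m y ∂(p (n + 1) (ω n)) ∂μ)
      Filter.atTop (nhds (∫ ω, g ω * ∫ y, f y ∂(p (n + 1) (ω n)) ∂μ)) := by
    refine tendsto_integral_of_dominated_convergence (fun _ => M) ?_ (integrable_const M) ?_ ?_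
    · intro m
      exact (hg.mul ((kernel_integral_measurable (p (n+1)) (φ m).measurable).comp
        (measurable_pi_apply n))).aestronglyMeasurable
    · intro m
      refine Filter.Eventually.of_forall fun ω => ?_
      rw [Real.norm_eq_abs, abs_mul]
      calc |g ω| * |∫ y, φ m y ∂(p (n + 1) (ω n))| ≤ 1 * M := by
            refine mul_le_mul (hgb ω) ?_ (abs_nonneg _) zero_le_one
            exact abs_integral_le _ M (hφb m)
        _ = M := one_mul M
    · refine Filter.Eventually.of_forall fun ω => ?_
      refine tendsto_const_nhds.mul ?_
      refine tendsto_integral_of_dominated_convergence (fun _ => M) ?_ (integrable_const M) ?_ ?_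
      · intro m; exact (φ m).measurable.aestronglyMeasurable
      · intro m
        exact Filter.Eventually.of_forall fun y => by
          simpa [Real.norm_eq_abs] using hφb m y
      · exact Filter.Eventually.of_forall fun y => hφt y
  have : ∀ m, ∫ ω, g ω * φ m (ω (n + 1)) ∂μ
      = ∫ ω, g ω * ∫ y, φ m y ∂(p (n + 1) (ω n)) ∂μ := fun m => hsimple (φ m)
  exact tendsto_nhds_unique (by simpa [this] using hL) hR


noncomputable def kiter (p : ℕ → Kernel E E) (h : E → ℝ) : ℕ → ℕ → E → ℝ
  | 0, _ => h
  | k + 1, i => fun x => ∫ y, kiter p h k (i + 1) y ∂(p (i + 1) x)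

lemma kiter_zero (p : ℕ → Kernel E E) (h : E → ℝ) (i : ℕ) : kiter p h 0 i = h := rfl

lemma kiter_succ (p : ℕ → Kernel E E) (h : E → ℝ) (k i : ℕ) :
    kiter p h (k + 1) i = fun x => ∫ y, kiter p h k (i + 1) y ∂(p (i + 1) x) := rfl

lemma kiter_measurable (p : ℕ → Kernel E E) [∀ i, IsMarkovKernel (p i)] {h : E → ℝ}
    (hh : Measurable h) : ∀ k i, Measurable (kiter p h k i) := by
  intro k
  induction k with
  | zero => intro i; exact hh
  | succ k IH =>
    intro i
    rw [kiter_succ]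
    exact kernel_integral_measurable (p (i + 1)) (IH (i + 1))

lemma kiter_bound (p : ℕ → Kernel E E) [∀ i, IsMarkovKernel (p i)] {h : E → ℝ} {hmax : ℝ}
    (hb : ∀ x, |h x| ≤ hmax) : ∀ k i x, |kiter p h k i x| ≤ hmax := by
  intro k
  induction k with
  | zero => intro i x; exact hb x
  | succ k IH =>
    intro i x
    rw [kiter_succ]
    exact abs_integral_le (p (i + 1) x) hmax (IH (i + 1))

lemma kiter_osc (p : ℕ → Kernel E E) [∀ i, IsMarkovKernel (p i)]
    (Pi : Measure E) [IsProbabilityMeasure Pi] {β hmax : ℝ}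
    (hβ0 : 0 < β) (hβ1 : β < 1) (hmax0 : 0 ≤ hmax)
    (hmino : ∀ i ≥ 1, ∀ x : E, ∀ A : Set E, MeasurableSet A →
      ENNReal.ofReal β * Pi A ≤ p i x A)
    {h : E → ℝ} (hh : Measurable h) (hb : ∀ x, |h x| ≤ hmax) :
    ∀ k i x y, |kiter p h k i x - kiter p h k i y| ≤ 2 * hmax * (1 - β) ^ k := by
  have hβ' : (0:ℝ) < 1 - β := by linarith
  intro k
  induction k with
  | zero =>
    intro i x y
    simp only [kiter_zero, pow_zero, mul_one]
    calc |h x - h y| ≤ |h x| + |h y| := abs_sub _ _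
      _ ≤ 2 * hmax := by have := hb x; have := hb y; linarith
  | succ k IH =>
    intro i x y
    set m := i + 1 with hm
    set F : E → ℝ := kiter p h k (i + 1) with hF
    have hFm : Measurable F := kiter_measurable p hh k (i + 1)
    have hFb : ∀ z, |F z| ≤ hmax := fun z => kiter_bound p hb k (i + 1) z
    set ρ : Measure E := ENNReal.ofReal β • Pi with hρ
    have hρuniv : ρ Set.univ = ENNReal.ofReal β := by
      rw [hρ, Measure.smul_apply, measure_univ, smul_eq_mul, mul_one]
    haveI : IsFiniteMeasure ρ := ⟨by rw [hρuniv]; exact ENNReal.ofReal_lt_top⟩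
    have hle : ∀ z : E, ρ ≤ p m z := by
      intro z
      refine Measure.le_iff.2 fun A hA => ?_
      rw [hρ, Measure.smul_apply, smul_eq_mul]
      exact hmino m (Nat.le_add_left 1 i) z A hA
    set ν : E → Measure E := fun z => p m z - ρ with hν
    have hmass : ∀ z, ν z Set.univ = ENNReal.ofReal (1 - β) := by
      intro z
      rw [hν]
      simp only
      rw [Measure.sub_apply MeasurableSet.univ (hle z), hρuniv, measure_univ,
        ENNReal.ofReal_sub 1 hβ0.le, ENNReal.ofReal_one]
    haveI hνfin : ∀ z, IsFiniteMeasure (ν z) :=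
      fun z => ⟨by rw [hmass]; exact ENNReal.ofReal_lt_top⟩
    have hmassR : ∀ z, (ν z).real Set.univ = 1 - β := fun z => by
      rw [measureReal_def, hmass, ENNReal.toReal_ofReal hβ'.le]
    have hFint : ∀ z, Integrable F (ν z) :=
      fun z => integrable_of_abs_le _ hFm.aestronglyMeasurable hmax hFb
    have hFintρ : Integrable F ρ := integrable_of_abs_le _ hFm.aestronglyMeasurable hmax hFb
    have hsplit : ∀ z, ∫ w, F w ∂(p m z) = (∫ w, F w ∂(ν z)) + ∫ w, F w ∂ρ := by
      intro z
      conv_lhs => rw [← Measure.sub_add_cancel_of_le (hle z)]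
      exact integral_add_measure (hFint z) hFintρ
    have hdiff : kiter p h (k + 1) i x - kiter p h (k + 1) i y
        = (∫ w, F w ∂(ν x)) - ∫ w, F w ∂(ν y) := by
      rw [kiter_succ]
      simp only [← hF, ← hm]
      rw [hsplit x, hsplit y]
      ring
    set D : ℝ := 2 * hmax * (1 - β) ^ k with hD
    have hD0 : 0 ≤ D := by positivity
    set c : ℝ := (1 - β)⁻¹ * ∫ w, F w ∂(ν y) with hc
    have hcb : ∀ a, |F a - c| ≤ D := by
      intro a
      have h1 : ∫ w, (F a - F w) ∂(ν y) = (1 - β) * (F a - c) := by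
        rw [integral_sub (integrable_const _) (hFint y), integral_const, hmassR, smul_eq_mul,
          hc]
        field_simp
      have h2 : |∫ w, (F a - F w) ∂(ν y)| ≤ D * (1 - β) := by
        have := norm_integral_le_of_norm_le_const (μ := ν y) (f := fun w => F a - F w) (C := D)
          (Filter.Eventually.of_forall fun w => by
            simpa [Real.norm_eq_abs] using IH (i + 1) a w)
        rwa [hmassR, Real.norm_eq_abs] at this
      rw [h1, abs_mul, abs_of_pos hβ'] at h2
      have := (mul_le_mul_iff_right₀ hβ').1 (by linarith [h2] : (1 - β) * |F a - c| ≤ (1 - β) * D)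
      linarith
    have h3 : (∫ w, F w ∂(ν x)) - ∫ w, F w ∂(ν y) = ∫ w, (F w - c) ∂(ν x) := by
      rw [integral_sub (hFint x) (integrable_const _), integral_const, hmassR, smul_eq_mul]
      have hcc : (1 - β) * c = ∫ w, F w ∂(ν y) := by
        rw [hc]; field_simp
      rw [hcc]
    have h4 : |∫ w, (F w - c) ∂(ν x)| ≤ D * (1 - β) := by
      have := norm_integral_le_of_norm_le_const (μ := ν x) (f := fun w => F w - c) (C := D)
        (Filter.Eventually.of_forall fun w => by simpa [Real.norm_eq_abs] using hcb w)
      rwa [hmassR, Real.norm_eq_abs] at this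
    rw [hdiff, h3]
    calc |∫ w, (F w - c) ∂(ν x)| ≤ D * (1 - β) := h4
      _ = 2 * hmax * (1 - β) ^ (k + 1) := by rw [hD, pow_succ]; ring

lemma tower (p : ℕ → Kernel E E) [∀ i, IsMarkovKernel (p i)]
    (μ : Measure (ℕ → E)) [IsProbabilityMeasure μ]
    (hM : ∀ n : ℕ, ∀ g : (ℕ → E) → ℝ, Measurable g → (∀ ω, |g ω| ≤ 1) →
        (∀ ω ω' : ℕ → E, (∀ i ≤ n, ω i = ω' i) → g ω = g ω') →
        ∀ A : Set E, MeasurableSet A →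
          ∫ ω, g ω * Set.indicator A (fun _ => (1 : ℝ)) (ω (n + 1)) ∂μ
            = ∫ ω, g ω * (p (n + 1) (ω n) A).toReal ∂μ)
    {h : E → ℝ} (hh : Measurable h) {hmax : ℝ} (hmax0 : 0 ≤ hmax) (hb : ∀ x, |h x| ≤ hmax) :
    ∀ k i, ∀ g : (ℕ → E) → ℝ, Measurable g → (∀ ω, |g ω| ≤ 1) →
      (∀ ω ω' : (ℕ → E), (∀ j ≤ i, ω j = ω' j) → g ω = g ω') →
      ∫ ω, g ω * h (ω (i + k)) ∂μ = ∫ ω, g ω * kiter p h k i (ω i) ∂μ := by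
  intro k
  induction k with
  | zero => intro i g hg hgb hgd; simp [kiter_zero]
  | succ k IH =>
    intro i g hg hgb hgd
    have hstep : i + (k + 1) = (i + 1) + k := by omega
    rw [hstep]
    have hgd' : ∀ ω ω' : (ℕ → E), (∀ j ≤ i + 1, ω j = ω' j) → g ω = g ω' :=
      fun ω ω' hj => hgd ω ω' fun j hji => hj j (by omega)
    rw [IH (i + 1) g hg hgb hgd']
    rw [markov_step p μ hM i g hg hgb hgd (kiter p h k (i + 1))
      (kiter_measurable p hh k (i + 1)) hmax hmax0 (fun z => kiter_bound p hb k (i + 1) z)]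
    rw [kiter_succ]


lemma cov_bound (p : ℕ → Kernel E E) [∀ i, IsMarkovKernel (p i)]
    (Pi : Measure E) [IsProbabilityMeasure Pi]
    (μ : Measure (ℕ → E)) [IsProbabilityMeasure μ]
    {β hmax : ℝ} (hβ0 : 0 < β) (hβ1 : β < 1) (hmax0 : 0 ≤ hmax)
    (hmino : ∀ i ≥ 1, ∀ x : E, ∀ A : Set E, MeasurableSet A →
      ENNReal.ofReal β * Pi A ≤ p i x A)
    (hM : ∀ n : ℕ, ∀ g : (ℕ → E) → ℝ, Measurable g → (∀ ω, |g ω| ≤ 1) →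
        (∀ ω ω' : ℕ → E, (∀ i ≤ n, ω i = ω' i) → g ω = g ω') →
        ∀ A : Set E, MeasurableSet A →
          ∫ ω, g ω * Set.indicator A (fun _ => (1 : ℝ)) (ω (n + 1)) ∂μ
            = ∫ ω, g ω * (p (n + 1) (ω n) A).toReal ∂μ)
    {h : E → ℝ} (hh : Measurable h) (hb : ∀ x, |h x| ≤ hmax) (x₀ : E) :
    ∀ i k : ℕ, |(∫ ω, h (ω i) * h (ω (i + k)) ∂μ)
      - (∫ ω, h (ω i) ∂μ) * ∫ ω, h (ω (i + k)) ∂μ| ≤ 4 * hmax ^ 2 * (1 - β) ^ k := by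
  intro i k
  set d : ℝ := hmax + 1 with hdd
  have hd : 0 < d := by linarith
  set g : (ℕ → E) → ℝ := fun ω => h (ω i) / d with hg
  have hgm : Measurable g := (hh.comp (measurable_pi_apply i)).div_const d
  have hgb : ∀ ω, |g ω| ≤ 1 := by
    intro ω
    rw [hg]
    simp only [abs_div, abs_of_pos hd]
    rw [div_le_one hd]
    calc |h (ω i)| ≤ hmax := hb _
      _ ≤ d := by linarith
  have hgd : ∀ ω ω' : (ℕ → E), (∀ j ≤ i, ω j = ω' j) → g ω = g ω' := by
    intro ω ω' hj
    rw [hg]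
    simp only [hj i le_rfl]
  set F : E → ℝ := kiter p h k i with hF
  have hFm : Measurable F := kiter_measurable p hh k i
  have hFb : ∀ z, |F z| ≤ hmax := fun z => kiter_bound p hb k i z
  have T1 := tower p μ hM hh hmax0 hb k i g hgm hgb hgd
  have T2 := tower p μ hM hh hmax0 hb k i (fun _ => (1:ℝ)) measurable_const
    (fun ω => by norm_num) (fun ω ω' _ => rfl)
  simp only [one_mul] at T2
  have hA : ∫ ω, h (ω i) * h (ω (i + k)) ∂μ = ∫ ω, h (ω i) * F (ω i) ∂μ := by
    calc ∫ ω, h (ω i) * h (ω (i + k)) ∂μ = ∫ ω, d * (g ω * h (ω (i + k))) ∂μ := by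
          refine integral_congr_ae (Filter.Eventually.of_forall fun ω => ?_)
          rw [hg]; field_simp
      _ = d * ∫ ω, g ω * h (ω (i + k)) ∂μ := integral_const_mul d _
      _ = d * ∫ ω, g ω * kiter p h k i (ω i) ∂μ := by rw [T1]
      _ = ∫ ω, d * (g ω * kiter p h k i (ω i)) ∂μ := (integral_const_mul d _).symm
      _ = ∫ ω, h (ω i) * F (ω i) ∂μ := by
          refine integral_congr_ae (Filter.Eventually.of_forall fun ω => ?_)
          rw [hg, ← hF]; field_simp
  have hB : ∫ ω, h (ω (i + k)) ∂μ = ∫ ω, F (ω i) ∂μ := T2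
  set a : ℝ := ∫ ω, h (ω i) ∂μ with ha
  set c : ℝ := F x₀ with hcdef
  have hosc := kiter_osc p Pi hβ0 hβ1 hmax0 hmino hh hb k
  have hFc : ∀ z, |F z - c| ≤ 2 * hmax * (1 - β) ^ k := fun z => hosc i z x₀
  have haabs : |a| ≤ hmax := abs_integral_le μ hmax fun ω => hb (ω i)
  have hhia : ∀ ω : ℕ → E, |h (ω i) - a| ≤ 2 * hmax := by
    intro ω
    calc |h (ω i) - a| ≤ |h (ω i)| + |a| := abs_sub _ _
      _ ≤ 2 * hmax := by have := hb (ω i); linarith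
  -- integrability
  have int_h : Integrable (fun ω => h (ω i)) μ :=
    integrable_of_abs_le μ (hh.comp (measurable_pi_apply i)).aestronglyMeasurable hmax
      fun ω => hb _
  have int_F : Integrable (fun ω => F (ω i)) μ :=
    integrable_of_abs_le μ (hFm.comp (measurable_pi_apply i)).aestronglyMeasurable hmax
      fun ω => hFb _
  have int_hF : Integrable (fun ω => h (ω i) * F (ω i)) μ :=
    integrable_of_abs_le μ
      ((hh.comp (measurable_pi_apply i)).mul (hFm.comp (measurable_pi_apply i))).aestronglyMeasurable
      (hmax * hmax) fun ω => by
        rw [abs_mul]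
        exact mul_le_mul (hb _) (hFb _) (abs_nonneg _) hmax0
  have key : ∫ ω, (h (ω i) - a) * (F (ω i) - c) ∂μ
      = (∫ ω, h (ω i) * F (ω i) ∂μ) - a * ∫ ω, F (ω i) ∂μ := by
    have hrw : (fun ω : ℕ → E => (h (ω i) - a) * (F (ω i) - c))
        = fun ω => (h (ω i) * F (ω i) - a * F (ω i) - c * h (ω i)) + a * c :=
      funext fun ω => by ring
    have I4 : Integrable (fun ω : ℕ → E => a * F (ω i)) μ := by
      exact int_F.const_mul a
    have I3 : Integrable (fun ω : ℕ → E => c * h (ω i)) μ := by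
      exact int_h.const_mul c
    have I2 : Integrable (fun ω : ℕ → E => h (ω i) * F (ω i) - a * F (ω i)) μ := by
      exact int_hF.sub I4
    have I1 : Integrable
        (fun ω : ℕ → E => h (ω i) * F (ω i) - a * F (ω i) - c * h (ω i)) μ := by
      exact I2.sub I3
    rw [hrw, integral_add I1 (integrable_const _), integral_sub I2 I3,
      integral_sub int_hF I4, integral_const_mul, integral_const_mul,
      integral_const, probReal_univ]
    simp only [ENNReal.toReal_one, smul_eq_mul, one_mul]
    ring
  have habs : |∫ ω, (h (ω i) - a) * (F (ω i) - c) ∂μ| ≤ 4 * hmax ^ 2 * (1 - β) ^ k := by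
    have hbnd : ∀ ω : ℕ → E, ‖(h (ω i) - a) * (F (ω i) - c)‖ ≤ 4 * hmax ^ 2 * (1 - β) ^ k := by
      intro ω
      rw [Real.norm_eq_abs, abs_mul]
      calc |h (ω i) - a| * |F (ω i) - c| ≤ (2 * hmax) * (2 * hmax * (1 - β) ^ k) := by
            refine mul_le_mul (hhia ω) (hFc _) (abs_nonneg _) (by linarith)
        _ = 4 * hmax ^ 2 * (1 - β) ^ k := by ring
    have := norm_integral_le_of_norm_le_const (μ := μ)
      (f := fun ω => (h (ω i) - a) * (F (ω i) - c)) (C := 4 * hmax ^ 2 * (1 - β) ^ k)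
      (Filter.Eventually.of_forall hbnd)
    rwa [probReal_univ, mul_one, Real.norm_eq_abs] at this
  rw [hA, hB, ← key]
  exact habs


end Chain

/-- **Variance bound in the proof of Theorem 2.** Under the minorization
condition with constant `β ∈ (0,1)`, for `h` bounded by `hmax` there is a constant `C`
depending only on `β` and `hmax` such that for the time-inhomogeneous chain `(xₙ)`
(realized by a measure `μ` on the path space, with initial distribution `μ₀` and
transitions `pᵢ`), `Var(Sₙ/n) ≤ C/n` for all `n ≥ 1`, where `Sₙ = ∑_{i=1}^n h(xᵢ)`. -/
theorem variance_bound_of_minorization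
    (β hmax : ℝ) (hβ0 : 0 < β) (hβ1 : β < 1) (hmax0 : 0 ≤ hmax) :
    ∃ C : ℝ, ∀ (E : Type) [MeasurableSpace E]
      (Pi : Measure E) [IsProbabilityMeasure Pi]
      (p : ℕ → Kernel E E) [∀ i, IsMarkovKernel (p i)],
      (∀ i ≥ 1, ∀ A : Set E, MeasurableSet A → ∫⁻ x, p i x A ∂Pi = Pi A) →
      (∀ i ≥ 1, ∀ x : E, ∀ A : Set E, MeasurableSet A →
        ENNReal.ofReal β * Pi A ≤ p i x A) →
      ∀ (h : E → ℝ), Measurable h → (∀ x, |h x| ≤ hmax) →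
      ∀ (μ₀ : Measure E), IsProbabilityMeasure μ₀ →
      -- `μ` is the law of the chain on the canonical path space (Ionescu–Tulcea):
      ∀ (μ : Measure (ℕ → E)), IsProbabilityMeasure μ →
      μ.map (fun ω => ω 0) = μ₀ →
      -- the Markov property: conditionally on the past up to time `n`, the state at
      -- time `n+1` is drawn from `p (n+1) (ω n)`:
      (∀ n : ℕ, ∀ g : (ℕ → E) → ℝ, Measurable g → (∀ ω, |g ω| ≤ 1) →
        (∀ ω ω' : ℕ → E, (∀ i ≤ n, ω i = ω' i) → g ω = g ω') →
        ∀ A : Set E, MeasurableSet A →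
          ∫ ω, g ω * Set.indicator A (fun _ => (1 : ℝ)) (ω (n + 1)) ∂μ
            = ∫ ω, g ω * (p (n + 1) (ω n) A).toReal ∂μ) →
      ∀ n : ℕ, 1 ≤ n →
        variance (fun ω => (∑ i ∈ Finset.Icc 1 n, h (ω i)) / n) μ ≤ C / n := by
  classical
  refine ⟨8 * hmax ^ 2 / β, ?_⟩
  intro E _ Pi _ p _ hinv hmino h hmeas hb μ₀ hμ₀p μ hμp hmap0 hM n hn
  haveI : IsProbabilityMeasure μ := hμp
  -- `E` is nonempty
  rcases isEmpty_or_nonempty E with hE | hE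
  · exfalso
    have h1 : Pi Set.univ = 1 := measure_univ
    rw [Set.univ_eq_empty_iff.2 hE, measure_empty] at h1
    exact zero_ne_one h1
  obtain ⟨x₀⟩ := hE
  have hγ0 : (0:ℝ) ≤ 1 - β := by linarith
  set γ : ℝ := 1 - β with hγ
  have covb := cov_bound p Pi μ hβ0 hβ1 hmax0 hmino hM hmeas hb x₀
  have covpair : ∀ i ∈ Finset.Icc 1 n, ∀ j ∈ Finset.Icc 1 n,
      |(∫ ω, h (ω i) * h (ω j) ∂μ) - (∫ ω, h (ω i) ∂μ) * ∫ ω, h (ω j) ∂μ|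
        ≤ 4 * hmax ^ 2 * γ ^ (max i j - min i j) := by
    intro i _ j _
    rcases le_total i j with hij | hij
    · have hc := covb i (j - i)
      rw [show i + (j - i) = j from by omega] at hc
      rw [max_eq_right hij, min_eq_left hij]
      exact hc
    · have hc := covb j (i - j)
      rw [show j + (i - j) = i from by omega] at hc
      rw [max_eq_left hij, min_eq_right hij]
      calc |(∫ ω, h (ω i) * h (ω j) ∂μ) - (∫ ω, h (ω i) ∂μ) * ∫ ω, h (ω j) ∂μ|
          = |(∫ ω, h (ω j) * h (ω i) ∂μ) - (∫ ω, h (ω j) ∂μ) * ∫ ω, h (ω i) ∂μ| := by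
            rw [show (fun ω : ℕ → E => h (ω i) * h (ω j))
                = fun ω => h (ω j) * h (ω i) from funext fun ω => mul_comm _ _,
              mul_comm (∫ ω, h (ω i) ∂μ)]
        _ ≤ _ := hc
  -- geometric series bound
  have hgeom : ∑ k ∈ Finset.range (n + 1), γ ^ k ≤ β⁻¹ := by
    have hmul := geom_sum_mul γ (n + 1)
    have hβm : γ - 1 = -β := by rw [hγ]; ring
    rw [hβm, mul_neg] at hmul
    have hpow : 0 ≤ γ ^ (n + 1) := pow_nonneg hγ0 _
    have hSβ : (∑ k ∈ Finset.range (n + 1), γ ^ k) * β ≤ 1 := by linarith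
    rw [← one_div, le_div_iff₀ hβ0]
    exact hSβ
  have hrow : ∀ i ∈ Finset.Icc 1 n,
      (∑ j ∈ Finset.Icc 1 n, γ ^ (max i j - min i j)) ≤ 2 * β⁻¹ := by
    intro i hi
    have hi' := Finset.mem_Icc.1 hi
    rw [← Finset.sum_filter_add_sum_filter_not (Finset.Icc 1 n) (fun j => j ≤ i)]
    have hS1 : ∑ j ∈ (Finset.Icc 1 n).filter (fun j => j ≤ i),
        γ ^ (max i j - min i j) ≤ β⁻¹ := by
      have he : ∀ j ∈ (Finset.Icc 1 n).filter (fun j => j ≤ i),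
          γ ^ (max i j - min i j) = γ ^ (i - j) := by
        intro j hj
        have hj' := Finset.mem_filter.1 hj
        rw [max_eq_left hj'.2, min_eq_right hj'.2]
      rw [Finset.sum_congr rfl he]
      have hinj : ∀ x ∈ (Finset.Icc 1 n).filter (fun j => j ≤ i),
          ∀ y ∈ (Finset.Icc 1 n).filter (fun j => j ≤ i), i - x = i - y → x = y := by
        intro x hx y hy hxy
        have h1 := Finset.mem_filter.1 hx
        have h2 := Finset.mem_filter.1 hy
        have h3 := Finset.mem_Icc.1 h1.1
        have h4 := Finset.mem_Icc.1 h2.1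
        omega
      rw [show (∑ j ∈ (Finset.Icc 1 n).filter (fun j => j ≤ i), γ ^ (i - j))
          = ∑ k ∈ ((Finset.Icc 1 n).filter (fun j => j ≤ i)).image (fun j => i - j), γ ^ k
          from (Finset.sum_image hinj).symm]
      refine le_trans (Finset.sum_le_sum_of_subset_of_nonneg ?_ ?_) hgeom
      · intro k hk
        simp only [Finset.mem_image, Finset.mem_filter, Finset.mem_Icc] at hk
        obtain ⟨j, ⟨⟨hj1, hj2⟩, hji⟩, rfl⟩ := hk
        exact Finset.mem_range.2 (by omega)
      · intro k _ _; exact pow_nonneg hγ0 k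
    have hS2 : ∑ j ∈ (Finset.Icc 1 n).filter (fun j => ¬ j ≤ i),
        γ ^ (max i j - min i j) ≤ β⁻¹ := by
      have he : ∀ j ∈ (Finset.Icc 1 n).filter (fun j => ¬ j ≤ i),
          γ ^ (max i j - min i j) = γ ^ (j - i) := by
        intro j hj
        have hj' := Finset.mem_filter.1 hj
        have hij : i ≤ j := le_of_lt (not_le.1 hj'.2)
        rw [max_eq_right hij, min_eq_left hij]
      rw [Finset.sum_congr rfl he]
      have hinj : ∀ x ∈ (Finset.Icc 1 n).filter (fun j => ¬ j ≤ i),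
          ∀ y ∈ (Finset.Icc 1 n).filter (fun j => ¬ j ≤ i), x - i = y - i → x = y := by
        intro x hx y hy hxy
        have h1 := Finset.mem_filter.1 hx
        have h2 := Finset.mem_filter.1 hy
        have h3 : ¬ x ≤ i := h1.2
        have h4 : ¬ y ≤ i := h2.2
        omega
      rw [show (∑ j ∈ (Finset.Icc 1 n).filter (fun j => ¬ j ≤ i), γ ^ (j - i))
          = ∑ k ∈ ((Finset.Icc 1 n).filter (fun j => ¬ j ≤ i)).image (fun j => j - i), γ ^ k
          from (Finset.sum_image hinj).symm]
      refine le_trans (Finset.sum_le_sum_of_subset_of_nonneg ?_ ?_) hgeom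
      · intro k hk
        simp only [Finset.mem_image, Finset.mem_filter, Finset.mem_Icc] at hk
        obtain ⟨j, ⟨⟨hj1, hj2⟩, hji⟩, rfl⟩ := hk
        exact Finset.mem_range.2 (by omega)
      · intro k _ _; exact pow_nonneg hγ0 k
    linarith
  -- integrability
  have hmi : ∀ i : ℕ, Measurable fun ω : ℕ → E => h (ω i) :=
    fun i => hmeas.comp (measurable_pi_apply i)
  have hint_i : ∀ i : ℕ, Integrable (fun ω => h (ω i)) μ := fun i =>
    integrable_of_abs_le μ (hmi i).aestronglyMeasurable hmax fun ω => hb _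
  have hint_ij : ∀ i j : ℕ, Integrable (fun ω => h (ω i) * h (ω j)) μ := fun i j =>
    integrable_of_abs_le μ ((hmi i).mul (hmi j)).aestronglyMeasurable (hmax * hmax) fun ω => by
      rw [abs_mul]; exact mul_le_mul (hb _) (hb _) (abs_nonneg _) hmax0
  set X : (ℕ → E) → ℝ := fun ω => ∑ i ∈ Finset.Icc 1 n, h (ω i) with hX
  have hXm : Measurable X := Finset.measurable_sum _ fun i _ => hmi i
  have hXb : ∀ ω, |X ω| ≤ n * hmax := by
    intro ω
    calc |X ω| ≤ ∑ i ∈ Finset.Icc 1 n, |h (ω i)| := Finset.abs_sum_le_sum_abs _ _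
      _ ≤ ∑ i ∈ Finset.Icc 1 n, hmax := Finset.sum_le_sum fun i _ => hb _
      _ = n * hmax := by
          rw [Finset.sum_const, Nat.card_Icc, Nat.add_sub_cancel, nsmul_eq_mul]
  have hX2 : MemLp X 2 μ := MemLp.of_bound hXm.aestronglyMeasurable (n * hmax)
    (Filter.Eventually.of_forall fun ω => by simpa [Real.norm_eq_abs] using hXb ω)
  have hvar : variance X μ = ∑ i ∈ Finset.Icc 1 n, ∑ j ∈ Finset.Icc 1 n,
      ((∫ ω, h (ω i) * h (ω j) ∂μ) - (∫ ω, h (ω i) ∂μ) * ∫ ω, h (ω j) ∂μ) := by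
    rw [variance_eq_sub hX2]
    have h1 : μ[X ^ 2] = ∑ i ∈ Finset.Icc 1 n, ∑ j ∈ Finset.Icc 1 n,
        ∫ ω, h (ω i) * h (ω j) ∂μ := by
      have hpt : (X ^ 2) = fun ω => ∑ i ∈ Finset.Icc 1 n, ∑ j ∈ Finset.Icc 1 n,
          h (ω i) * h (ω j) := by
        funext ω
        simp only [_root_.Pi.pow_apply, hX, pow_two]
        rw [Finset.sum_mul_sum]
      rw [hpt, integral_finset_sum _ fun i _ => integrable_finset_sum _ fun j _ => hint_ij i j]
      exact Finset.sum_congr rfl fun i _ => integral_finset_sum _ fun j _ => hint_ij i j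
    have h2 : μ[X] = ∑ i ∈ Finset.Icc 1 n, ∫ ω, h (ω i) ∂μ :=
      integral_finset_sum _ fun i _ => hint_i i
    rw [h1, h2, pow_two, Finset.sum_mul_sum, ← Finset.sum_sub_distrib]
    exact Finset.sum_congr rfl fun i _ => (Finset.sum_sub_distrib ..).symm
  have hvb : variance X μ ≤ 8 * hmax ^ 2 / β * n := by
    rw [hvar]
    calc ∑ i ∈ Finset.Icc 1 n, ∑ j ∈ Finset.Icc 1 n,
          ((∫ ω, h (ω i) * h (ω j) ∂μ) - (∫ ω, h (ω i) ∂μ) * ∫ ω, h (ω j) ∂μ)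
        ≤ ∑ i ∈ Finset.Icc 1 n, ∑ j ∈ Finset.Icc 1 n,
          (4 * hmax ^ 2 * γ ^ (max i j - min i j)) := by
          refine Finset.sum_le_sum fun i hi => Finset.sum_le_sum fun j hj => ?_
          exact le_trans (le_abs_self _) (covpair i hi j hj)
      _ = ∑ i ∈ Finset.Icc 1 n, 4 * hmax ^ 2 *
            ∑ j ∈ Finset.Icc 1 n, γ ^ (max i j - min i j) := by
          exact Finset.sum_congr rfl fun i _ => (Finset.mul_sum _ _ _).symm
      _ ≤ ∑ i ∈ Finset.Icc 1 n, 4 * hmax ^ 2 * (2 * β⁻¹) := by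
          refine Finset.sum_le_sum fun i hi => ?_
          exact mul_le_mul_of_nonneg_left (hrow i hi) (by positivity)
      _ = n * (4 * hmax ^ 2 * (2 * β⁻¹)) := by
          rw [Finset.sum_const, Nat.card_Icc, Nat.add_sub_cancel, nsmul_eq_mul]
      _ = 8 * hmax ^ 2 / β * n := by
          field_simp
          ring
  have hn0 : (0:ℝ) < n := by
    have : (0:ℕ) < n := by omega
    exact_mod_cast this
  have hfun : (fun ω : ℕ → E => (∑ i ∈ Finset.Icc 1 n, h (ω i)) / (n:ℝ))
      = fun ω => (n:ℝ)⁻¹ * X ω := by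
    funext ω
    rw [hX, div_eq_inv_mul]
  rw [hfun, variance_const_mul]
  calc ((n:ℝ)⁻¹) ^ 2 * variance X μ ≤ ((n:ℝ)⁻¹) ^ 2 * (8 * hmax ^ 2 / β * n) :=
        mul_le_mul_of_nonneg_left hvb (by positivity)
    _ = 8 * hmax ^ 2 / β / n := by
        field_simp
end

section
/- (Corollary 1(i).) Let π be a probability density on ℝ^d with π > 0 everywhere, and let Π be the probability measure with density π. Let q(z|x) be a proposal density with q(z|x) > 0 and q(z|x) ≥ β π(z) for all x, z, where 0 < β < 1. Let p be the Metropolis–Hastings kernel p(x, A) = ∫_A α(z, x) q(z|x) dz + 1_A(x) (1 − ∫ α(z, x) q(z|x) dz), where α(z, x) = min(1, π(z) q(x|z) / (π(x) q(z|x))). Then p(x, A) ≥ β Π(A) for every x ∈ ℝ^d and every measurable set A. -/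
open MeasureTheory

/-- **Corollary 1(i).** If the proposal density satisfies
`q(z|x) ≥ β π(z)` for all `x, z` with `0 < β < 1`, then the Metropolis–Hastings
kernel `p(x, A) = ∫_A α(z,x) q(z|x) dz + 1_A(x)(1 − ∫ α(z,x) q(z|x) dz)`, with
`α(z,x) = min(1, π(z)q(x|z)/(π(x)q(z|x)))`, satisfies `p(x, A) ≥ β Π(A)` for all
`x` and all measurable `A`, where `Π(A) = ∫_A π(z) dz`.  Here `q z x = q(z|x)`. -/
theorem mh_kernel_minorization {d : ℕ}
    (π : (Fin d → ℝ) → ℝ) (q : (Fin d → ℝ) → (Fin d → ℝ) → ℝ)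
    (hπmeas : Measurable π) (hπpos : ∀ x, 0 < π x)
    (hπint : ∫ x, π x = 1)
    (hqmeas : Measurable (Function.uncurry q)) (hqpos : ∀ z x, 0 < q z x)
    (hqint : ∀ x, ∫ z, q z x = 1)
    (β : ℝ) (hβ0 : 0 < β) (hβ1 : β < 1)
    (hdom : ∀ z x, β * π z ≤ q z x) :
    ∀ (x : Fin d → ℝ) (A : Set (Fin d → ℝ)), MeasurableSet A →
      β * ∫ z in A, π z ≤
        (∫ z in A, min 1 (π z * q x z / (π x * q z x)) * q z x)
          + Set.indicator A (fun _ => (1 : ℝ)) x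
            * (1 - ∫ z, min 1 (π z * q x z / (π x * q z x)) * q z x) := by
  intro x A hA
  set f : (Fin d → ℝ) → ℝ := fun z => min 1 (π z * q x z / (π x * q z x)) * q z x with hf
  -- measurability
  have hq1 : Measurable (fun z => q z x) := hqmeas.comp (measurable_id.prodMk measurable_const)
  have hq2 : Measurable (fun z => q x z) := hqmeas.comp (measurable_const.prodMk measurable_id)
  have hfmeas : Measurable f := by
    apply Measurable.mul _ hq1
    exact (measurable_const.min (((hπmeas.mul hq2)).div ((measurable_const.mul hq1))))
  -- pointwise bounds
  have hf_nonneg : ∀ z, 0 ≤ f z := by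
    intro z
    apply mul_nonneg _ (hqpos z x).le
    exact le_min zero_le_one (div_nonneg (mul_nonneg (hπpos z).le (hqpos x z).le)
      (mul_nonneg (hπpos x).le (hqpos z x).le))
  have hf_le_q : ∀ z, f z ≤ q z x := by
    intro z
    have := min_le_left 1 (π z * q x z / (π x * q z x))
    calc f z ≤ 1 * q z x := mul_le_mul_of_nonneg_right this (hqpos z x).le
      _ = q z x := one_mul _
  have hf_ge : ∀ z, β * π z ≤ f z := by
    intro z
    have h1 : β * π z ≤ q z x := hdom z x
    have h2 : β * π z ≤ π z * q x z / (π x * q z x) * q z x := by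
      have hxz : β * π x ≤ q x z := hdom x z
      have heq : π z * q x z / (π x * q z x) * q z x = π z * (q x z / π x) := by
        field_simp
        exact mul_div_mul_right _ _ (ne_of_gt (hqpos z x))
      rw [heq]
      have hb : β ≤ q x z / π x := (le_div_iff₀ (hπpos x)).2 (by linarith)
      calc β * π z = π z * β := mul_comm _ _
        _ ≤ π z * (q x z / π x) := mul_le_mul_of_nonneg_left hb (hπpos z).le
    have hmin : f z = min (1 * q z x) (π z * q x z / (π x * q z x) * q z x) :=
      min_mul_of_nonneg _ _ (hqpos z x).le
    rw [hmin, one_mul]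
    exact le_min h1 h2
  -- integrability
  have hq_int : Integrable (fun z => q z x) := by
    by_contra h
    have := hqint x
    rw [integral_undef h] at this
    norm_num at this
  have hπ_int : Integrable π := by
    by_contra h
    rw [integral_undef h] at hπint
    norm_num at hπint
  have hf_int : Integrable f := by
    refine hq_int.mono hfmeas.aestronglyMeasurable ?_
    filter_upwards with z
    rw [Real.norm_of_nonneg (hf_nonneg z), Real.norm_of_nonneg (hqpos z x).le]
    exact hf_le_q z
  -- main estimate
  have hstep : β * ∫ z in A, π z ≤ ∫ z in A, f z := by
    rw [← smul_eq_mul, ← integral_smul]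
    exact setIntegral_mono_on ((hπ_int.smul β).integrableOn)
      hf_int.integrableOn hA (fun z _ => hf_ge z)
  have hint_le : ∫ z, f z ≤ 1 := by
    calc ∫ z, f z ≤ ∫ z, q z x := integral_mono hf_int hq_int hf_le_q
      _ = 1 := hqint x
  have hind : 0 ≤ Set.indicator A (fun _ => (1 : ℝ)) x * (1 - ∫ z, f z) :=
    mul_nonneg (Set.indicator_nonneg (fun _ _ => zero_le_one) x) (by linarith)
  linarith
end

section
/- (Corollary 1(ii).) Let π be a probability density on ℝ^d with π > 0 everywhere and associated probability measure Π. Suppose the proposal density is a mixture q(z|x) = ω q₁(z|x) + (1 − ω) q₂(z|x) with 0 < ω < 1, where q₁ and q₂ are proposal densities, q(z|x) > 0 for all x, z, and q₁(z|x) ≥ β π(z) for all x, z with 0 < β < 1. Then the Metropolis–Hastings kernel p built from proposal q satisfies p(x, A) ≥ ω β Π(A) for every x and every measurable set A. -/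
open MeasureTheory

/-- **Corollary 1(ii).** If the proposal density is the mixture
`q(z|x) = ω q₁(z|x) + (1−ω) q₂(z|x)` with `0 < ω < 1` and `q₁(z|x) ≥ β π(z)` for all
`x, z` with `0 < β < 1`, then the Metropolis–Hastings kernel built from `q` satisfies
`p(x, A) ≥ ω β Π(A)` for every `x` and measurable `A`, where `Π(A) = ∫_A π(z) dz`.
Here `q₁ z x = q₁(z|x)` etc. -/
theorem mh_mixture_kernel_minorization {d : ℕ}
    (π : (Fin d → ℝ) → ℝ) (q₁ q₂ : (Fin d → ℝ) → (Fin d → ℝ) → ℝ)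
    (hπmeas : Measurable π) (hπpos : ∀ x, 0 < π x)
    (hπint : ∫ x, π x = 1)
    (hq₁meas : Measurable (Function.uncurry q₁)) (hq₁nn : ∀ z x, 0 ≤ q₁ z x)
    (hq₁int : ∀ x, ∫ z, q₁ z x = 1)
    (hq₂meas : Measurable (Function.uncurry q₂)) (hq₂nn : ∀ z x, 0 ≤ q₂ z x)
    (hq₂int : ∀ x, ∫ z, q₂ z x = 1)
    (ω : ℝ) (hω0 : 0 < ω) (hω1 : ω < 1)
    (q : (Fin d → ℝ) → (Fin d → ℝ) → ℝ)
    (hq : ∀ z x, q z x = ω * q₁ z x + (1 - ω) * q₂ z x)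
    (hqpos : ∀ z x, 0 < q z x)
    (β : ℝ) (hβ0 : 0 < β) (hβ1 : β < 1)
    (hdom : ∀ z x, β * π z ≤ q₁ z x) :
    ∀ (x : Fin d → ℝ) (A : Set (Fin d → ℝ)), MeasurableSet A →
      ω * β * ∫ z in A, π z ≤
        (∫ z in A, min 1 (π z * q x z / (π x * q z x)) * q z x)
          + Set.indicator A (fun _ => (1 : ℝ)) x
            * (1 - ∫ z, min 1 (π z * q x z / (π x * q z x)) * q z x) := by
  intro x A hA
  -- measurability of q
  have hqmeas : Measurable (Function.uncurry q) := by
    have h : Function.uncurry q = fun p =>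
        ω * Function.uncurry q₁ p + (1 - ω) * Function.uncurry q₂ p := by
      funext p; simp [Function.uncurry, hq]
    rw [h]
    exact (hq₁meas.const_mul ω).add (hq₂meas.const_mul (1 - ω))
  -- integrability of densities
  have hπI : Integrable π := by
    by_contra h
    rw [integral_undef h] at hπint; norm_num at hπint
  have hq₁I : ∀ y, Integrable fun z => q₁ z y := by
    intro y
    by_contra h
    have := hq₁int y
    rw [integral_undef h] at this; norm_num at this
  have hq₂I : ∀ y, Integrable fun z => q₂ z y := by
    intro y
    by_contra h
    have := hq₂int y
    rw [integral_undef h] at this; norm_num at this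
  have hqI : Integrable fun z => q z x := by
    have h : (fun z => q z x) =
        fun z => ω * q₁ z x + (1 - ω) * q₂ z x := by funext z; exact hq z x
    rw [h]
    exact ((hq₁I x).const_mul ω).add ((hq₂I x).const_mul (1 - ω))
  have hqintone : ∫ z, q z x = 1 := by
    have h : (fun z => q z x) =
        fun z => ω * q₁ z x + (1 - ω) * q₂ z x := by funext z; exact hq z x
    rw [h, integral_add ((hq₁I x).const_mul ω) ((hq₂I x).const_mul (1 - ω)),
      integral_const_mul, integral_const_mul, hq₁int, hq₂int]
    ring
  set f : (Fin d → ℝ) → ℝ := fun z => min 1 (π z * q x z / (π x * q z x)) * q z x with hf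
  have hmzx : Measurable fun z => q z x :=
    hqmeas.comp (measurable_id.prodMk measurable_const)
  have hmxz : Measurable fun z => q x z :=
    hqmeas.comp (measurable_const.prodMk measurable_id)
  have hfmeas : Measurable f := by
    apply Measurable.mul _ hmzx
    exact (measurable_const.min (((hπmeas.mul hmxz)).div ((measurable_const.mul hmzx))))
  -- pointwise bounds
  have hfq : ∀ z, f z ≤ q z x := by
    intro z
    have h1 : min 1 (π z * q x z / (π x * q z x)) ≤ 1 := min_le_left _ _
    have := (hqpos z x).le
    calc f z ≤ 1 * q z x := mul_le_mul_of_nonneg_right h1 this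
    _ = q z x := one_mul _
  have hfnn : ∀ z, 0 ≤ f z := by
    intro z
    apply mul_nonneg _ (hqpos z x).le
    apply le_min zero_le_one
    exact div_nonneg (mul_nonneg (hπpos z).le (hqpos x z).le)
      (mul_nonneg (hπpos x).le (hqpos z x).le)
  have key : ∀ z, ω * β * π z ≤ f z := by
    intro z
    have hqzx := hqpos z x
    have h1 : ω * β * π z ≤ q z x := by
      have hd := hdom z x
      have h2 := hq₂nn z x
      nlinarith [hq z x, (hπpos z).le]
    have hx := hπpos x
    have h2 : ω * β * π z ≤ π z * q x z / π x := by
      rw [le_div_iff₀ hx]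
      have hd := hdom x z
      have h2 := hq₂nn x z
      have h4 : ω * β * π x ≤ q x z := by nlinarith [hq x z]
      nlinarith [mul_le_mul_of_nonneg_left h4 (hπpos z).le]
    have heq : f z = min (q z x) (π z * q x z / π x) := by
      simp only [hf]
      have h3 : π z * q x z / (π x * q z x) * q z x = π z * q x z / π x := by
        field_simp
      rw [min_mul_of_nonneg _ _ hqzx.le, one_mul, h3]
    rw [heq]
    exact le_min h1 h2
  have hfI : Integrable f :=
    hqI.mono' hfmeas.aestronglyMeasurable
      (Filter.Eventually.of_forall fun z => by rw [Real.norm_eq_abs, abs_of_nonneg (hfnn z)]; exact hfq z)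
  -- set integral comparison
  have hstep : ω * β * ∫ z in A, π z ≤ ∫ z in A, f z := by
    rw [← integral_const_mul]
    exact setIntegral_mono_on ((hπI.const_mul _).integrableOn) hfI.integrableOn hA
      fun z _ => key z
  -- rejection term nonneg
  have hle1 : ∫ z, f z ≤ 1 := by
    rw [← hqintone]
    exact integral_mono hfI hqI hfq
  have hind : 0 ≤ Set.indicator A (fun _ => (1 : ℝ)) x * (1 - ∫ z, f z) := by
    apply mul_nonneg _ (by linarith)
    exact Set.indicator_nonneg (fun _ _ => zero_le_one) x
  linarith
end
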